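/- arXiv:1308.1138 — 5 statements merged into one kernel-verified Lean document; each statement's English description precedes it below -/
import Mathlib

section
/- For sums of scaled unit types, Σ_{i=1}^n α_i·U_i ≡ Σ_{j=1}^m β_j·V_j holds if and only if Σ_{i=1}^n α_i·(∀X.U_i) ≡ Σ_{j=1}^m β_j·(∀X.V_j) holds. -/
/-!
Formalization of the vectorial λ-calculus (Arrighi, Díaz-Caro, Valiron):
syntax of types and terms, type equivalence, typing rules, reduction, etc.
-/

universe u

/-- Types of λ^vec. Type variables come in two kinds, tagged by a `Bool`:
`true` for unit type variables 𝕌, `false` for general type variables 𝕏.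
`fa b n U` is ∀X.U where X is the variable of kind `b` with index `n`. -/
inductive VType (S : Type u) : Type u where
  | uvar : ℕ → VType S
  | gvar : ℕ → VType S
  | arrow : VType S → VType S → VType S
  | fa : Bool → ℕ → VType S → VType S
  | smul : S → VType S → VType S
  | add : VType S → VType S → VType S

namespace VType

variable {S : Type u}

/-- Unit types: U ::= 𝕌 | U → T | ∀𝕌.U | ∀𝕏.U -/
inductive IsUnit : VType S → Prop where
  | uvar (n : ℕ) : IsUnit (uvar n)
  | arrow {U T : VType S} : IsUnit U → IsUnit (arrow U T)
  | fa {b : Bool} {n : ℕ} {U : VType S} : IsUnit U → IsUnit (fa b n U)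

/-- 𝒰 ::= U | 𝕏 : a unit type or a general type variable. -/
def IsUG (T : VType S) : Prop := IsUnit T ∨ ∃ n, T = gvar n

/-- Free type variables (as kind-index pairs). -/
def freeTV : VType S → Set (Bool × ℕ)
  | uvar n => {(true, n)}
  | gvar n => {(false, n)}
  | arrow U T => freeTV U ∪ freeTV T
  | fa b n U => freeTV U \ {(b, n)}
  | smul _ T => freeTV T
  | add T R => freeTV T ∪ freeTV R

/-- Substitution of the type variable `v` by the type `A`;
it distributes homomorphically through `smul` and `add`. -/
def substT : VType S → (Bool × ℕ) → VType S → VType S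
  | uvar n, v, A => if v = (true, n) then A else uvar n
  | gvar n, v, A => if v = (false, n) then A else gvar n
  | arrow U T, v, A => arrow (substT U v A) (substT T v A)
  | fa b n U, v, A => if v = (b, n) then fa b n U else fa b n (substT U v A)
  | smul a T, v, A => smul a (substT T v A)
  | add T R, v, A => add (substT T v A) (substT R v A)

/-- The kind condition: a unit variable may only be substituted by a unit type. -/
def kindOK (v : Bool × ℕ) (A : VType S) : Prop := v.1 = true → IsUnit A

/-- ∀X⃗.T for a vector of variables. -/
def faMany (Xs : List (Bool × ℕ)) (T : VType S) : VType S :=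
  Xs.foldr (fun v T => fa v.1 v.2 T) T

/-- T[A⃗/X⃗] for vectors of variables and types. -/
def substMany (T : VType S) (Xs : List (Bool × ℕ)) (As : List (VType S)) : VType S :=
  (Xs.zip As).foldl (fun T p => substT T p.1 p.2) T

/-- The linear combination Σᵢ αᵢ·Tᵢ of a list of scalar–type pairs.
(The value on the empty list is irrelevant junk; it is only used on
nonempty lists.) -/
def ssumL [CommRing S] : List (S × VType S) → VType S
  | [] => smul 0 (uvar 0)
  | [p] => smul p.1 p.2
  | p :: l => add (smul p.1 p.2) (ssumL l)

end VType

/-- Equivalence of types: the smallest congruence satisfying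
1·T ≡ T, α·(β·T) ≡ (α×β)·T, α·T + α·R ≡ α·(T+R), α·T + β·T ≡ (α+β)·T,
commutativity and associativity of +. -/
inductive TEq {S : Type u} [CommRing S] : VType S → VType S → Prop where
  | refl (T : VType S) : TEq T T
  | symm {T R : VType S} : TEq T R → TEq R T
  | trans {T R Q : VType S} : TEq T R → TEq R Q → TEq T Q
  | oneSmul (T : VType S) : TEq (VType.smul 1 T) T
  | smulSmul (a b : S) (T : VType S) :
      TEq (VType.smul a (VType.smul b T)) (VType.smul (a * b) T)
  | smulAdd (a : S) (T R : VType S) :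
      TEq (VType.add (VType.smul a T) (VType.smul a R)) (VType.smul a (VType.add T R))
  | addSmul (a b : S) (T : VType S) :
      TEq (VType.add (VType.smul a T) (VType.smul b T)) (VType.smul (a + b) T)
  | comm (T R : VType S) : TEq (VType.add T R) (VType.add R T)
  | assoc (T R Q : VType S) :
      TEq (VType.add T (VType.add R Q)) (VType.add (VType.add T R) Q)
  | arrowCong {U V T R : VType S} : TEq U V → TEq T R → TEq (VType.arrow U T) (VType.arrow V R)
  | faCong (b : Bool) (n : ℕ) {T R : VType S} : TEq T R → TEq (VType.fa b n T) (VType.fa b n R)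
  | smulCong (a : S) {T R : VType S} : TEq T R → TEq (VType.smul a T) (VType.smul a R)
  | addCong {T T' R R' : VType S} :
      TEq T T' → TEq R R' → TEq (VType.add T R) (VType.add T' R')

/-- Terms of λ^vec. -/
inductive VTerm (S : Type u) : Type u where
  | var : ℕ → VTerm S
  | lam : ℕ → VTerm S → VTerm S
  | app : VTerm S → VTerm S → VTerm S
  | zero : VTerm S
  | smul : S → VTerm S → VTerm S
  | add : VTerm S → VTerm S → VTerm S

namespace VTerm

variable {S : Type u}

/-- Basis terms: variables and λ-abstractions. -/
def IsBasis : VTerm S → Prop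
  | var _ => True
  | lam _ _ => True
  | _ => False

/-- Free term variables. -/
def freeV : VTerm S → Set ℕ
  | var x => {x}
  | lam x t => freeV t \ {x}
  | app t r => freeV t ∪ freeV r
  | zero => ∅
  | smul _ t => freeV t
  | add t r => freeV t ∪ freeV r

def ClosedTerm (t : VTerm S) : Prop := freeV t = ∅

/-- Capture-avoiding substitution of the basis term `b` for the variable `x`;
it distributes homomorphically through linear combinations. -/
def substV : VTerm S → ℕ → VTerm S → VTerm S
  | var y, x, b => if y = x then b else var y
  | lam y t, x, b => if y = x then lam y t else lam y (substV t x b)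
  | app t r, x, b => app (substV t x b) (substV r x b)
  | zero, _, _ => zero
  | smul a t, x, b => smul a (substV t x b)
  | add t r, x, b => add (substV t x b) (substV r x b)

end VTerm

/-- Typing contexts: partial assignments of (unit) types to term variables. -/
def Ctx (S : Type u) := ℕ → Option (VType S)

def Ctx.extend {S : Type u} (Γ : Ctx S) (x : ℕ) (U : VType S) : Ctx S :=
  fun y => if y = x then some U else Γ y

/-- Free type variables of a context. -/
def Ctx.freeTV {S : Type u} (Γ : Ctx S) : Set (Bool × ℕ) :=
  {v | ∃ x U, Γ x = some U ∧ v ∈ VType.freeTV U}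

/-- Type substitution applied pointwise to a context. -/
def Ctx.substT {S : Type u} (Γ : Ctx S) (v : Bool × ℕ) (A : VType S) : Ctx S :=
  fun x => (Γ x).map (fun U => VType.substT U v A)

/-- The typing rules of the vectorial type system:
(ax), (0_I), (→_I), (→_E), (∀_I), (∀_E), (α_I), (+_I), (≡). -/
inductive Typing {S : Type u} [CommRing S] : Ctx S → VTerm S → VType S → Prop where
  | ax {Γ : Ctx S} {x : ℕ} {U : VType S} :
      Γ x = some U → VType.IsUnit U → Typing Γ (VTerm.var x) U
  | zeroI {Γ : Ctx S} {t : VTerm S} {T : VType S} :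
      Typing Γ t T → Typing Γ VTerm.zero (VType.smul 0 T)
  | arrI {Γ : Ctx S} {x : ℕ} {U : VType S} {t : VTerm S} {T : VType S} :
      VType.IsUnit U → Typing (Γ.extend x U) t T →
      Typing Γ (VTerm.lam x t) (VType.arrow U T)
  | arrE {Γ : Ctx S} {t r : VTerm S} (U : VType S) (Xs : List (Bool × ℕ))
      (p : S × VType S) (ps : List (S × VType S))
      (q : S × List (VType S)) (qs : List (S × List (VType S))) :
      VType.IsUnit U →
      (∀ w ∈ q :: qs, w.2.length = Xs.length ∧
        ∀ pr ∈ Xs.zip w.2, VType.kindOK pr.1 pr.2) →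
      Typing Γ t (VType.ssumL ((p :: ps).map
        (fun pi => (pi.1, VType.faMany Xs (VType.arrow U pi.2))))) →
      Typing Γ r (VType.ssumL ((q :: qs).map
        (fun qj => (qj.1, VType.substMany U Xs qj.2)))) →
      Typing Γ (VTerm.app t r)
        (VType.ssumL ((p :: ps).flatMap (fun pi => (q :: qs).map
          (fun qj => (pi.1 * qj.1, VType.substMany pi.2 Xs qj.2)))))
  | faI {Γ : Ctx S} {t : VTerm S} (v : Bool × ℕ)
      (p : S × VType S) (ps : List (S × VType S)) :
      v ∉ Γ.freeTV →
      (∀ w ∈ p :: ps, VType.IsUnit w.2) →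
      Typing Γ t (VType.ssumL (p :: ps)) →
      Typing Γ t (VType.ssumL ((p :: ps).map (fun w => (w.1, VType.fa v.1 v.2 w.2))))
  | faE {Γ : Ctx S} {t : VTerm S} (v : Bool × ℕ) (A : VType S)
      (p : S × VType S) (ps : List (S × VType S)) :
      VType.kindOK v A →
      (∀ w ∈ p :: ps, VType.IsUnit w.2) →
      Typing Γ t (VType.ssumL ((p :: ps).map (fun w => (w.1, VType.fa v.1 v.2 w.2)))) →
      Typing Γ t (VType.ssumL ((p :: ps).map (fun w => (w.1, VType.substT w.2 v A))))
  | smulI {Γ : Ctx S} {t : VTerm S} {T : VType S} (a : S) :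
      Typing Γ t T → Typing Γ (VTerm.smul a t) (VType.smul a T)
  | addI {Γ : Ctx S} {t r : VTerm S} {T R : VType S} :
      Typing Γ t T → Typing Γ r R → Typing Γ (VTerm.add t r) (VType.add T R)
  | equiv {Γ : Ctx S} {t : VTerm S} {T R : VType S} :
      Typing Γ t T → TEq T R → Typing Γ t R

/-- AC equivalence of terms (associativity and commutativity of +,
as a congruence). -/
inductive ACEq {S : Type u} : VTerm S → VTerm S → Prop where
  | refl (t : VTerm S) : ACEq t t
  | symm {t r : VTerm S} : ACEq t r → ACEq r t
  | trans {t r u : VTerm S} : ACEq t r → ACEq r u → ACEq t u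
  | comm (t r : VTerm S) : ACEq (VTerm.add t r) (VTerm.add r t)
  | assoc (t r u : VTerm S) :
      ACEq (VTerm.add t (VTerm.add r u)) (VTerm.add (VTerm.add t r) u)
  | lamCong (x : ℕ) {t r : VTerm S} : ACEq t r → ACEq (VTerm.lam x t) (VTerm.lam x r)
  | appCong {t t' r r' : VTerm S} :
      ACEq t t' → ACEq r r' → ACEq (VTerm.app t r) (VTerm.app t' r')
  | smulCong (a : S) {t r : VTerm S} : ACEq t r → ACEq (VTerm.smul a t) (VTerm.smul a r)
  | addCong {t t' r r' : VTerm S} :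
      ACEq t t' → ACEq r r' → ACEq (VTerm.add t r) (VTerm.add t' r')

/-- One-step reduction of λ^vec, labelled by a `Bool` which is `true`
exactly when the underlying rule is a factorisation rule (Group F).
Reduction acts modulo AC of +, and is closed under contexts. -/
inductive Red {S : Type u} [CommRing S] : Bool → VTerm S → VTerm S → Prop where
  -- Group E
  | zeroSmul (t : VTerm S) : Red false (VTerm.smul 0 t) VTerm.zero
  | oneSmul (t : VTerm S) : Red false (VTerm.smul 1 t) t
  | smulZero (a : S) : Red false (VTerm.smul a VTerm.zero) VTerm.zero
  | smulSmul (a b : S) (t : VTerm S) :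
      Red false (VTerm.smul a (VTerm.smul b t)) (VTerm.smul (a * b) t)
  | smulAdd (a : S) (t r : VTerm S) :
      Red false (VTerm.smul a (VTerm.add t r)) (VTerm.add (VTerm.smul a t) (VTerm.smul a r))
  -- Group F
  | factor (a b : S) (t : VTerm S) :
      Red true (VTerm.add (VTerm.smul a t) (VTerm.smul b t)) (VTerm.smul (a + b) t)
  | factor1 (a : S) (t : VTerm S) :
      Red true (VTerm.add (VTerm.smul a t) t) (VTerm.smul (a + 1) t)
  | factor2 (t : VTerm S) : Red true (VTerm.add t t) (VTerm.smul (1 + 1) t)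
  | addZero (t : VTerm S) : Red true (VTerm.add t VTerm.zero) t
  -- Group B
  | beta (x : ℕ) (t b : VTerm S) :
      VTerm.IsBasis b → Red false (VTerm.app (VTerm.lam x t) b) (VTerm.substV t x b)
  -- Group A
  | appAddL (t r u : VTerm S) :
      Red false (VTerm.app (VTerm.add t r) u) (VTerm.add (VTerm.app t u) (VTerm.app r u))
  | appAddR (t r u : VTerm S) :
      Red false (VTerm.app t (VTerm.add r u)) (VTerm.add (VTerm.app t r) (VTerm.app t u))
  | appSmulL (a : S) (t r : VTerm S) :
      Red false (VTerm.app (VTerm.smul a t) r) (VTerm.smul a (VTerm.app t r))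
  | appSmulR (a : S) (t r : VTerm S) :
      Red false (VTerm.app t (VTerm.smul a r)) (VTerm.smul a (VTerm.app t r))
  | appZeroL (t : VTerm S) : Red false (VTerm.app VTerm.zero t) VTerm.zero
  | appZeroR (t : VTerm S) : Red false (VTerm.app t VTerm.zero) VTerm.zero
  -- contextual rules
  | smulCtx {f : Bool} {t r : VTerm S} (a : S) :
      Red f t r → Red f (VTerm.smul a t) (VTerm.smul a r)
  | addCtx {f : Bool} {t r : VTerm S} (u : VTerm S) :
      Red f t r → Red f (VTerm.add u t) (VTerm.add u r)
  | appCtxR {f : Bool} {t r : VTerm S} (u : VTerm S) :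
      Red f t r → Red f (VTerm.app u t) (VTerm.app u r)
  | appCtxL {f : Bool} {t r : VTerm S} (u : VTerm S) :
      Red f t r → Red f (VTerm.app t u) (VTerm.app r u)
  | lamCtx {f : Bool} {t r : VTerm S} (x : ℕ) :
      Red f t r → Red f (VTerm.lam x t) (VTerm.lam x r)
  -- reduction modulo AC of +
  | ac {f : Bool} {t t' r r' : VTerm S} :
      ACEq t t' → Red f t' r' → ACEq r' r → Red f t r

/-- One-step reduction (by any rule). -/
def Red1 {S : Type u} [CommRing S] (t r : VTerm S) : Prop := ∃ f, Red f t r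

/-- Strong normalisation: every reduction sequence from `t` is finite. -/
def SN {S : Type u} [CommRing S] (t : VTerm S) : Prop :=
  Acc (fun a b : VTerm S => Red1 b a) t

/-- Algebraic contexts F(t⃗) ::= tᵢ | F(t⃗)+G(t⃗) | α·F(t⃗) | 0. -/
inductive AlgCtx (S : Type u) : Type u where
  | idx : ℕ → AlgCtx S
  | add : AlgCtx S → AlgCtx S → AlgCtx S
  | smul : S → AlgCtx S → AlgCtx S
  | zero : AlgCtx S

/-- Filling an algebraic context with a list of terms. -/
def AlgCtx.fill {S : Type u} : AlgCtx S → List (VTerm S) → VTerm S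
  | .idx i, ts => ts.getD i VTerm.zero
  | .add F G, ts => VTerm.add (F.fill ts) (G.fill ts)
  | .smul a F, ts => VTerm.smul a (F.fill ts)
  | .zero, _ => VTerm.zero

/-- `t` is not a λ-abstraction. -/
def NotLam {S : Type u} : VTerm S → Prop
  | VTerm.lam _ _ => False
  | _ => True

/-- Closed neutral terms: closed, not an abstraction, and reducing to something. -/
def Neutral {S : Type u} [CommRing S] (t : VTerm S) : Prop :=
  VTerm.ClosedTerm t ∧ NotLam t ∧ ∃ r, Red1 t r

/-- Reducibility candidates: sets of closed terms satisfying RC1–RC4. -/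
def IsRC {S : Type u} [CommRing S] (A : Set (VTerm S)) : Prop :=
  (∀ t ∈ A, VTerm.ClosedTerm t ∧ SN t) ∧
  (∀ t ∈ A, ∀ r, Red1 t r → r ∈ A) ∧
  (∀ t, Neutral t → (∀ r, Red1 t r → r ∈ A) → t ∈ A) ∧
  VTerm.zero ∈ A

/-- The arrow operation on candidates: closure under RC3 and RC4 of the set of
closed `t` with (t)0 ∈ B and (t)b ∈ B for every basis term b ∈ A. -/
inductive arrowSet {S : Type u} [CommRing S] (A B : Set (VTerm S)) : VTerm S → Prop where
  | base {t : VTerm S} : VTerm.ClosedTerm t → VTerm.app t VTerm.zero ∈ B →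
      (∀ b ∈ A, VTerm.IsBasis b → VTerm.app t b ∈ B) → arrowSet A B t
  | neutral {t : VTerm S} : Neutral t → (∀ r, Red1 t r → arrowSet A B r) → arrowSet A B t
  | zero : arrowSet A B VTerm.zero

/-- The sum Σᵢ 𝒜ᵢ of a family of candidates: closure under CC, RC2 and RC3
of the set of algebraic combinations F(t⃗) of terms each in some 𝒜ᵢ. -/
inductive sumSet {S : Type u} [CommRing S] {ι : Type*} (As : ι → Set (VTerm S)) :
    VTerm S → Prop where
  | base (F : AlgCtx S) (ts : List (VTerm S)) :
      (∀ t ∈ ts, ∃ i, t ∈ As i) → sumSet As (F.fill ts)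
  | red {t r : VTerm S} : sumSet As t → Red1 t r → sumSet As r
  | neutral {t : VTerm S} : Neutral t → (∀ r, Red1 t r → sumSet As r) → sumSet As t
  | cc (F : AlgCtx S) (ts : List (VTerm S)) {t : VTerm S} :
      sumSet As (F.fill ts) → t ∈ ts → sumSet As t

/-- The order ⊒ on types (`TGe T R` means T ⊒ R): the smallest reflexive,
transitive, congruent relation with (α+β)·T ⊒ α·T + β·T' whenever some term
can be typed with both α·T and β·T', and T ⊒ T + 0·R. -/
inductive TGe {S : Type u} [CommRing S] : VType S → VType S → Prop where
  | refl (T : VType S) : TGe T T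
  | trans {T R Q : VType S} : TGe T R → TGe R Q → TGe T Q
  | factor {Γ : Ctx S} {t : VTerm S} {a b : S} {T T' : VType S} :
      Typing Γ (VTerm.smul a t) (VType.smul a T) →
      Typing Γ (VTerm.smul b t) (VType.smul b T') →
      TGe (VType.smul (a + b) T) (VType.add (VType.smul a T) (VType.smul b T'))
  | addZero (T R : VType S) : TGe T (VType.add T (VType.smul 0 R))
  | addCong (Q : VType S) {T R : VType S} : TGe T R → TGe (VType.add T Q) (VType.add R Q)
  | smulCong (a : S) {T R : VType S} : TGe T R → TGe (VType.smul a T) (VType.smul a R)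
  | arrowCong (U : VType S) {T R : VType S} :
      TGe T R → TGe (VType.arrow U T) (VType.arrow U R)
  | faCong (b : Bool) (n : ℕ) {T R : VType S} :
      TGe T R → TGe (VType.fa b n T) (VType.fa b n R)

/-- The single-variable relation T ≻^t_{X,Γ} R of Definition 4.3. -/
inductive StepOrd {S : Type u} [CommRing S] (Γ : Ctx S) (t : VTerm S) (X : Bool × ℕ) :
    VType S → VType S → Prop where
  | faI {T R : VType S} (l : List (S × VType S)) :
      l ≠ [] → (∀ p ∈ l, VType.IsUnit p.2) →
      X ∉ Γ.freeTV → Typing Γ t T → Typing Γ t R →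
      TEq T (VType.ssumL l) →
      TEq R (VType.ssumL (l.map (fun p => (p.1, VType.fa X.1 X.2 p.2)))) →
      StepOrd Γ t X T R
  | faE {T R : VType S} (l : List (S × VType S)) (A : VType S) :
      l ≠ [] → (∀ p ∈ l, VType.IsUnit p.2) → VType.kindOK X A →
      X ∉ Γ.freeTV → Typing Γ t T → Typing Γ t R →
      TEq T (VType.ssumL (l.map (fun p => (p.1, VType.fa X.1 X.2 p.2)))) →
      TEq R (VType.ssumL (l.map (fun p => (p.1, VType.substT p.2 X A)))) →
      StepOrd Γ t X T R

/-- The relation T ≽^t_{𝒱,Γ} R of Definition 4.3. -/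
inductive TOrd {S : Type u} [CommRing S] (Γ : Ctx S) (t : VTerm S) :
    Set (Bool × ℕ) → VType S → VType S → Prop where
  | step {X : Bool × ℕ} {T R : VType S} : StepOrd Γ t X T R → TOrd Γ t {X} T R
  | trans {V₁ V₂ : Set (Bool × ℕ)} {T R Q : VType S} :
      TOrd Γ t V₁ T R → TOrd Γ t V₂ R Q → TOrd Γ t (V₁ ∪ V₂) T Q
  | ofEq (V : Set (Bool × ℕ)) {T R : VType S} : TEq T R → TOrd Γ t V T R

/-- Inner sum Σⱼ βⱼ·bⱼ of terms, with the convention that the empty sum is 0. -/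
def tsumI {S : Type u} : List (S × VTerm S) → VTerm S
  | [] => VTerm.zero
  | [p] => VTerm.smul p.1 p.2
  | p :: l => VTerm.add (VTerm.smul p.1 p.2) (tsumI l)

/-- Outer sum of a list of terms. -/
def tsumO {S : Type u} : List (VTerm S) → VTerm S
  | [] => VTerm.zero
  | [t] => t
  | t :: l => VTerm.add t (tsumO l)

section Aux

variable {S : Type} [CommRing S]

/-- Wrap every base summand in `∀X`. -/
def VType.wrap (X : Bool × ℕ) : VType S → VType S
  | .smul a T => .smul a (VType.wrap X T)
  | .add T R => .add (VType.wrap X T) (VType.wrap X R)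
  | T => .fa X.1 X.2 T

/-- Strip a top-level `∀X` from every base summand. -/
def VType.unwrap (X : Bool × ℕ) : VType S → VType S
  | .smul a T => .smul a (VType.unwrap X T)
  | .add T R => .add (VType.unwrap X T) (VType.unwrap X R)
  | .fa b n U => if (b, n) = X then U else .fa b n U
  | T => T

theorem TEq.wrap {X : Bool × ℕ} {T R : VType S} (h : TEq T R) :
    TEq (VType.wrap X T) (VType.wrap X R) := by
  induction h with
  | refl => exact TEq.refl _
  | symm _ ih => exact ih.symm
  | trans _ _ ih1 ih2 => exact ih1.trans ih2
  | oneSmul T => exact TEq.oneSmul _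
  | smulSmul a b T => exact TEq.smulSmul _ _ _
  | smulAdd a T R => exact TEq.smulAdd _ _ _
  | addSmul a b T => exact TEq.addSmul _ _ _
  | comm T R => exact TEq.comm _ _
  | assoc T R Q => exact TEq.assoc _ _ _
  | arrowCong h1 h2 => exact TEq.faCong _ _ (TEq.arrowCong h1 h2)
  | faCong b n h => exact TEq.faCong _ _ (TEq.faCong b n h)
  | smulCong a _ ih => exact TEq.smulCong a ih
  | addCong _ _ ih1 ih2 => exact TEq.addCong ih1 ih2

theorem TEq.unwrap {X : Bool × ℕ} {T R : VType S} (h : TEq T R) :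
    TEq (VType.unwrap X T) (VType.unwrap X R) := by
  induction h with
  | refl => exact TEq.refl _
  | symm _ ih => exact ih.symm
  | trans _ _ ih1 ih2 => exact ih1.trans ih2
  | oneSmul T => exact TEq.oneSmul _
  | smulSmul a b T => exact TEq.smulSmul _ _ _
  | smulAdd a T R => exact TEq.smulAdd _ _ _
  | addSmul a b T => exact TEq.addSmul _ _ _
  | comm T R => exact TEq.comm _ _
  | assoc T R Q => exact TEq.assoc _ _ _
  | arrowCong h1 h2 => exact TEq.arrowCong h1 h2
  | faCong b n h =>
      simp only [VType.unwrap]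
      split_ifs with hb
      · exact h
      · exact TEq.faCong b n h
  | smulCong a _ ih => exact TEq.smulCong a ih
  | addCong _ _ ih1 ih2 => exact TEq.addCong ih1 ih2

theorem VType.wrap_unit {X : Bool × ℕ} {U : VType S} (h : VType.IsUnit U) :
    VType.wrap X U = VType.fa X.1 X.2 U := by
  cases h <;> rfl

theorem VType.wrap_ssumL {X : Bool × ℕ} (p : S × VType S) (l : List (S × VType S))
    (hu : ∀ q ∈ p :: l, VType.IsUnit q.2) :
    VType.wrap X (VType.ssumL (p :: l)) =
      VType.ssumL ((p :: l).map (fun p => (p.1, VType.fa X.1 X.2 p.2))) := by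
  induction l generalizing p with
  | nil => simp only [VType.ssumL, List.map, VType.wrap, VType.wrap_unit (hu p (by simp))]
  | cons q l ih =>
      have h1 : VType.wrap X (VType.ssumL (p :: q :: l)) =
          VType.add (VType.smul p.1 (VType.wrap X p.2)) (VType.wrap X (VType.ssumL (q :: l))) := rfl
      rw [h1, ih q (fun r hr => hu r (List.mem_cons_of_mem p hr)),
        VType.wrap_unit (hu p (by simp))]
      rfl

omit [CommRing S] in
theorem VType.unwrap_fa {X : Bool × ℕ} (U : VType S) :
    VType.unwrap X (VType.fa X.1 X.2 U) = U := by
  simp [VType.unwrap]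

theorem VType.unwrap_ssumL {X : Bool × ℕ} (l : List (S × VType S)) (hl : l ≠ []) :
    VType.unwrap X (VType.ssumL (l.map (fun p => (p.1, VType.fa X.1 X.2 p.2)))) =
      VType.ssumL l := by
  induction l with
  | nil => exact absurd rfl hl
  | cons p l ih =>
      cases l with
      | nil =>
          show VType.smul p.1 (VType.unwrap X (VType.fa X.1 X.2 p.2)) = _
          rw [VType.unwrap_fa]
          rfl
      | cons q l =>
          have h1 : VType.unwrap X (VType.ssumL ((p :: q :: l).map
              (fun p => (p.1, VType.fa X.1 X.2 p.2)))) =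
            VType.add (VType.smul p.1 (VType.unwrap X (VType.fa X.1 X.2 p.2)))
              (VType.unwrap X (VType.ssumL ((q :: l).map
                (fun p => (p.1, VType.fa X.1 X.2 p.2))))) := rfl
          rw [h1, ih (by simp), VType.unwrap_fa]
          rfl

end Aux

/-- Σᵢ αᵢ·Uᵢ ≡ Σⱼ βⱼ·Vⱼ iff Σᵢ αᵢ·∀X.Uᵢ ≡ Σⱼ βⱼ·∀X.Vⱼ. -/
theorem equiv_forall_iff {S : Type} [CommRing S] (X : Bool × ℕ)
    (l₁ l₂ : List (S × VType S)) (h₁ : l₁ ≠ []) (h₂ : l₂ ≠ [])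
    (hu₁ : ∀ p ∈ l₁, VType.IsUnit p.2) (hu₂ : ∀ p ∈ l₂, VType.IsUnit p.2) :
    TEq (VType.ssumL l₁) (VType.ssumL l₂) ↔
    TEq (VType.ssumL (l₁.map (fun p => (p.1, VType.fa X.1 X.2 p.2))))
        (VType.ssumL (l₂.map (fun p => (p.1, VType.fa X.1 X.2 p.2)))) := by
  constructor
  · intro h
    have := TEq.wrap (X := X) h
    obtain ⟨p1, l1, rfl⟩ := List.exists_cons_of_ne_nil h₁
    obtain ⟨p2, l2, rfl⟩ := List.exists_cons_of_ne_nil h₂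
    rwa [VType.wrap_ssumL p1 l1 hu₁, VType.wrap_ssumL p2 l2 hu₂] at this
  · intro h
    have := TEq.unwrap (X := X) h
    rwa [VType.unwrap_ssumL l₁ h₁, VType.unwrap_ssumL l₂ h₂] at this
end

section
/- If Σ_{i=1}^n α_i·(∀X.U_i) ≡ Σ_{j=1}^m β_j·V_j, where U_i and V_j are unit types, then for every j there exists a unit type W_j such that V_j ≡ ∀X.W_j. -/
/-!
Formalization of the vectorial λ-calculus (Arrighi, Díaz-Caro, Valiron):
syntax of types and terms, type equivalence, typing rules, reduction, etc.
-/

universe u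

/-- Auxiliary invariant: every leaf under `smul`/`add` is `fa X W` with `W`
equivalent to a unit type. -/
def GoodFa {S : Type} [CommRing S] (X : Bool × ℕ) : VType S → Prop
  | .smul _ T => GoodFa X T
  | .add T R => GoodFa X T ∧ GoodFa X R
  | .fa b n W => (b, n) = X ∧ ∃ U, VType.IsUnit U ∧ TEq W U
  | _ => False

theorem goodFa_iff_of_teq {S : Type} [CommRing S] {X : Bool × ℕ} {T R : VType S}
    (h : TEq T R) : GoodFa X T ↔ GoodFa X R := by
  induction h with
  | refl => rfl
  | symm _ ih => exact ih.symm
  | trans _ _ ih₁ ih₂ => exact ih₁.trans ih₂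
  | oneSmul T => rfl
  | smulSmul a b T => rfl
  | smulAdd a T R => simp [GoodFa]
  | addSmul a b T => simp [GoodFa]
  | comm T R => simp [GoodFa]; tauto
  | assoc T R Q => simp [GoodFa]; tauto
  | arrowCong _ _ _ _ => simp [GoodFa]
  | faCong b n h ih =>
      simp only [GoodFa]
      constructor
      · rintro ⟨hx, U, hU, hEq⟩; exact ⟨hx, U, hU, TEq.trans (TEq.symm h) hEq⟩
      · rintro ⟨hx, U, hU, hEq⟩; exact ⟨hx, U, hU, TEq.trans h hEq⟩
  | smulCong a _ ih => exact ih
  | addCong _ _ ih₁ ih₂ => simp only [GoodFa]; tauto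

theorem goodFa_ssumL {S : Type} [CommRing S] {X : Bool × ℕ} :
    ∀ {l : List (S × VType S)}, l ≠ [] →
      (GoodFa X (VType.ssumL l) ↔ ∀ p ∈ l, GoodFa X p.2)
  | [], h => absurd rfl h
  | [p], _ => by simp [VType.ssumL, GoodFa]
  | p :: q :: l, _ => by
      have ih := goodFa_ssumL (X := X) (l := q :: l) (by simp)
      simp only [VType.ssumL, GoodFa] at *
      rw [ih]; simp

/-- if Σᵢ αᵢ·∀X.Uᵢ ≡ Σⱼ βⱼ·Vⱼ then every Vⱼ is equivalent
to some ∀X.Wⱼ with Wⱼ a unit type. -/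
theorem equiv_forall_shape {S : Type} [CommRing S] (X : Bool × ℕ)
    (l₁ l₂ : List (S × VType S)) (h₁ : l₁ ≠ []) (h₂ : l₂ ≠ [])
    (hu₁ : ∀ p ∈ l₁, VType.IsUnit p.2) (hu₂ : ∀ p ∈ l₂, VType.IsUnit p.2)
    (h : TEq (VType.ssumL (l₁.map (fun p => (p.1, VType.fa X.1 X.2 p.2))))
             (VType.ssumL l₂)) :
    ∀ p ∈ l₂, ∃ W : VType S, VType.IsUnit W ∧ TEq p.2 (VType.fa X.1 X.2 W) := by
  have hg₁ : GoodFa X (VType.ssumL (l₁.map (fun p => (p.1, VType.fa X.1 X.2 p.2)))) := by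
    rw [goodFa_ssumL (by simpa using h₁)]
    rintro q hq
    simp only [List.mem_map] at hq
    obtain ⟨p, hp, rfl⟩ := hq
    exact ⟨Prod.mk.eta, p.2, hu₁ p hp, TEq.refl _⟩
  have hg₂ : GoodFa X (VType.ssumL l₂) := (goodFa_iff_of_teq h).mp hg₁
  rw [goodFa_ssumL h₂] at hg₂
  intro p hp
  have := hg₂ p hp
  rcases hV : p.2 with _ | _ | _ | ⟨b, n, W'⟩ | _ | _ <;>
    rw [hV] at this <;> simp only [GoodFa] at this
  · obtain ⟨hx, U, hU, hEq⟩ := this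
    obtain ⟨rfl, rfl⟩ : b = X.1 ∧ n = X.2 := by
      cases X; exact ⟨congrArg Prod.fst hx, congrArg Prod.snd hx⟩
    exact ⟨U, hU, TEq.faCong _ _ hEq⟩
  · exact absurd (hV ▸ hu₂ p hp) (by intro h'; cases h')
  · exact absurd (hV ▸ hu₂ p hp) (by intro h'; cases h')
end

section
/- Scalar generation lemma: if Γ ⊢ α·t : T is derivable in λ^vec, then there exists a type R such that T ≡ α·R and Γ ⊢ t : R is derivable. -/
/-!
Formalization of the vectorial λ-calculus (Arrighi, Díaz-Caro, Valiron):
syntax of types and terms, type equivalence, typing rules, reduction, etc.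
-/

universe u

/-! ### Auxiliary development for the scalar generation lemma -/

namespace ScalarGen
open VType
open Classical

variable {S : Type} [CommRing S]

/-- Atoms: types that are not scalar multiples or sums at head. -/
def VAtom : VType S → Prop
  | .smul _ _ => False
  | .add _ _ => False
  | _ => True

/-- Head equivalence of atoms. -/
inductive AEq : VType S → VType S → Prop
  | refl (T : VType S) : AEq T T
  | arrow {U V T R : VType S} : TEq U V → TEq T R → AEq (.arrow U T) (.arrow V R)
  | fa (b : Bool) (n : ℕ) {T R : VType S} : TEq T R → AEq (.fa b n T) (.fa b n R)

theorem AEq.toTEq {T R : VType S} (h : AEq T R) : TEq T R := by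
  cases h with
  | refl => exact TEq.refl _
  | arrow h1 h2 => exact TEq.arrowCong h1 h2
  | fa b n h => exact TEq.faCong b n h

theorem AEq.symm {T R : VType S} (h : AEq T R) : AEq R T := by
  cases h with
  | refl => exact AEq.refl _
  | arrow h1 h2 => exact AEq.arrow h1.symm h2.symm
  | fa b n h => exact AEq.fa b n h.symm

theorem AEq.trans {T R Q : VType S} (h1 : AEq T R) (h2 : AEq R Q) : AEq T Q := by
  cases h1 with
  | refl => exact h2
  | arrow a b =>
    cases h2 with
    | refl => exact AEq.arrow a b
    | arrow c d => exact AEq.arrow (a.trans c) (b.trans d)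
  | fa bb n a =>
    cases h2 with
    | refl => exact AEq.fa bb n a
    | fa _ _ c => exact AEq.fa _ _ (a.trans c)

def ASetoid (S : Type) [CommRing S] : Setoid (VType S) :=
  ⟨AEq, ⟨fun T => AEq.refl T, AEq.symm, AEq.trans⟩⟩

def QT (S : Type) [CommRing S] := Quotient (ASetoid S)

def cl (T : VType S) : QT S := Quotient.mk (ASetoid S) T

theorem cl_eq_of_aeq {T R : VType S} (h : AEq T R) : cl T = cl R := Quotient.sound h

theorem aeq_of_cl_eq {T R : VType S} (h : cl T = cl R) : AEq T R := Quotient.exact h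

/-- The coefficient function of a list of (scalar, type) pairs. -/
noncomputable def fp (l : List (S × VType S)) : QT S →₀ S :=
  (l.map fun p => Finsupp.single (cl p.2) p.1).sum

@[simp] theorem fp_nil : fp ([] : List (S × VType S)) = 0 := rfl

@[simp] theorem fp_cons (p : S × VType S) (l : List (S × VType S)) :
    fp (p :: l) = Finsupp.single (cl p.2) p.1 + fp l := by
  simp [fp]

@[simp] theorem fp_append (l₁ l₂ : List (S × VType S)) :
    fp (l₁ ++ l₂) = fp l₁ + fp l₂ := by
  simp [fp]

theorem fp_map_smul (a : S) (l : List (S × VType S)) :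
    fp (l.map fun p => (a * p.1, p.2)) = a • fp l := by
  induction l with
  | nil => simp
  | cons p l ih => simp [ih, Finsupp.smul_single, smul_add, smul_eq_mul]

/-- The list of classes occurring. -/
def clsList (l : List (S × VType S)) : List (QT S) := l.map fun p => cl p.2

@[simp] theorem clsList_nil : clsList ([] : List (S × VType S)) = [] := rfl

@[simp] theorem clsList_cons (p : S × VType S) (l : List (S × VType S)) :
    clsList (p :: l) = cl p.2 :: clsList l := rfl

@[simp] theorem clsList_append (l₁ l₂ : List (S × VType S)) :
    clsList (l₁ ++ l₂) = clsList l₁ ++ clsList l₂ := by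
  simp [clsList]

theorem clsList_map_smul (a : S) (l : List (S × VType S)) :
    clsList (l.map fun p => (a * p.1, p.2)) = clsList l := by
  simp [clsList, List.map_map]

/-- Equivalence of linear-combination lists. -/
def LEq (l₁ l₂ : List (S × VType S)) : Prop :=
  fp l₁ = fp l₂ ∧ ∀ j, j ∈ clsList l₁ ↔ j ∈ clsList l₂

theorem LEq.refl (l : List (S × VType S)) : LEq l l := ⟨rfl, fun _ => Iff.rfl⟩

theorem LEq.symm {l₁ l₂ : List (S × VType S)} (h : LEq l₁ l₂) : LEq l₂ l₁ :=
  ⟨h.1.symm, fun j => (h.2 j).symm⟩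

theorem LEq.trans {l₁ l₂ l₃ : List (S × VType S)} (h : LEq l₁ l₂) (h' : LEq l₂ l₃) :
    LEq l₁ l₃ := ⟨h.1.trans h'.1, fun j => (h.2 j).trans (h'.2 j)⟩

/-- Decomposition of a type into a linear combination of atoms. -/
def decV : VType S → List (S × VType S)
  | .smul a T => (decV T).map fun p => (a * p.1, p.2)
  | .add T R => decV T ++ decV R
  | T => [(1, T)]

@[simp] theorem decV_smul (a : S) (T : VType S) :
    decV (VType.smul a T) = (decV T).map fun p => (a * p.1, p.2) := rfl

@[simp] theorem decV_add (T R : VType S) : decV (VType.add T R) = decV T ++ decV R := rfl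

theorem dec_ne_nil (T : VType S) : decV T ≠ [] := by
  induction T with
  | smul a T ih => simpa [decV] using ih
  | add T R ihT ihR => simp [decV, ihT]
  | uvar n => simp [decV]
  | gvar n => simp [decV]
  | arrow U T _ _ => simp [decV]
  | fa b n T _ => simp [decV]

theorem dec_atom (T : VType S) : ∀ p ∈ decV T, VAtom p.2 := by
  induction T with
  | smul a T ih =>
    intro p hp
    simp only [decV_smul, List.mem_map] at hp
    obtain ⟨q, hq, rfl⟩ := hp
    exact ih q hq
  | add T R ihT ihR =>
    intro p hp
    rcases List.mem_append.1 hp with h | h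
    · exact ihT p h
    · exact ihR p h
  | uvar n => intro p hp; simp [decV] at hp; subst hp; trivial
  | gvar n => intro p hp; simp [decV] at hp; subst hp; trivial
  | arrow U T _ _ => intro p hp; simp [decV] at hp; subst hp; trivial
  | fa b n T _ => intro p hp; simp [decV] at hp; subst hp; trivial

theorem dec_of_atom {T : VType S} (h : VAtom T) : decV T = [(1, T)] := by
  cases T with
  | smul a T => exact absurd h (by simp [VAtom])
  | add T R => exact absurd h (by simp [VAtom])
  | uvar n => rfl
  | gvar n => rfl
  | arrow U T => rfl
  | fa b n T => rfl

/-! ### ssumL lemmas -/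

theorem ssumL_single (p : S × VType S) : ssumL [p] = VType.smul p.1 p.2 := rfl

theorem ssumL_cons2 (p q : S × VType S) (l : List (S × VType S)) :
    ssumL (p :: q :: l) = VType.add (VType.smul p.1 p.2) (ssumL (q :: l)) := rfl

theorem ssumL_cons {l : List (S × VType S)} (p : S × VType S) (h : l ≠ []) :
    ssumL (p :: l) = VType.add (VType.smul p.1 p.2) (ssumL l) := by
  cases l with
  | nil => exact absurd rfl h
  | cons q l => rfl

theorem teq_cons {l₁ l₂ : List (S × VType S)} (p : S × VType S)
    (h1 : l₁ ≠ []) (h2 : l₂ ≠ []) (h : TEq (ssumL l₁) (ssumL l₂)) :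
    TEq (ssumL (p :: l₁)) (ssumL (p :: l₂)) := by
  rw [ssumL_cons p h1, ssumL_cons p h2]
  exact TEq.addCong (TEq.refl _) h

theorem teq_head {a : S} {u v : VType S} {l : List (S × VType S)} (h : TEq u v) :
    TEq (ssumL ((a, u) :: l)) (ssumL ((a, v) :: l)) := by
  cases l with
  | nil => exact TEq.smulCong a h
  | cons q l => exact TEq.addCong (TEq.smulCong a h) (TEq.refl _)

theorem teq_perm {l₁ l₂ : List (S × VType S)} (h : l₁.Perm l₂) :
    TEq (ssumL l₁) (ssumL l₂) := by
  induction h with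
  | nil => exact TEq.refl _
  | @cons x l₁ l₂ hp ih =>
    cases l₁ with
    | nil =>
      have : l₂ = [] := hp.symm.eq_nil
      subst this; exact TEq.refl _
    | cons y l₁' =>
      cases l₂ with
      | nil => exact absurd hp.eq_nil (by simp)
      | cons z l₂' => exact teq_cons x (by simp) (by simp) ih
  | @swap x y l =>
    cases l with
    | nil => exact TEq.comm _ _
    | cons q l' =>
      exact TEq.trans (TEq.assoc _ _ _)
        (TEq.trans (TEq.addCong (TEq.comm _ _) (TEq.refl _)) (TEq.symm (TEq.assoc _ _ _)))
  | trans h1 h2 ih1 ih2 => exact ih1.trans ih2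

theorem teq_append {l₁ l₂ : List (S × VType S)} (h1 : l₁ ≠ []) (h2 : l₂ ≠ []) :
    TEq (ssumL (l₁ ++ l₂)) (VType.add (ssumL l₁) (ssumL l₂)) := by
  induction l₁ with
  | nil => exact absurd rfl h1
  | cons p l ih =>
    cases l with
    | nil =>
      rw [List.singleton_append, ssumL_cons p h2]
      exact TEq.refl _
    | cons q l' =>
      have hne : (q :: l') ++ l₂ ≠ [] := by simp
      rw [List.cons_append, ssumL_cons p hne, ssumL_cons2]
      exact TEq.trans (TEq.addCong (TEq.refl _) (ih (by simp))) (TEq.assoc _ _ _)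

theorem teq_smul_ssumL (a : S) {l : List (S × VType S)} (h : l ≠ []) :
    TEq (VType.smul a (ssumL l)) (ssumL (l.map fun p => (a * p.1, p.2))) := by
  induction l with
  | nil => exact absurd rfl h
  | cons p l ih =>
    cases l with
    | nil => exact TEq.smulSmul a p.1 p.2
    | cons q l' =>
      exact TEq.trans (TEq.symm (TEq.smulAdd _ _ _))
        (TEq.addCong (TEq.smulSmul _ _ _) (ih (by simp)))

theorem teq_ssumL_dec (T : VType S) : TEq T (ssumL (decV T)) := by
  induction T with
  | smul a T ih =>
    exact TEq.trans (TEq.smulCong a ih) (teq_smul_ssumL a (dec_ne_nil T))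
  | add T R ihT ihR =>
    exact TEq.trans (TEq.addCong ihT ihR)
      (TEq.symm (teq_append (dec_ne_nil T) (dec_ne_nil R)))
  | uvar n => exact TEq.symm (TEq.oneSmul _)
  | gvar n => exact TEq.symm (TEq.oneSmul _)
  | arrow U T _ _ => exact TEq.symm (TEq.oneSmul _)
  | fa b n T _ => exact TEq.symm (TEq.oneSmul _)

theorem teq_ssumL_map {β : Type} {l : List β} (f g : β → S × VType S) (h0 : l ≠ [])
    (h : ∀ x ∈ l, (f x).1 = (g x).1 ∧ TEq (f x).2 (g x).2) :
    TEq (ssumL (l.map f)) (ssumL (l.map g)) := by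
  induction l with
  | nil => exact absurd rfl h0
  | cons x l ih =>
    have hx := h x (by simp)
    cases l with
    | nil =>
      rw [List.map_singleton, List.map_singleton, ssumL_single, ssumL_single, hx.1]
      exact TEq.smulCong _ hx.2
    | cons y l' =>
      rw [List.map_cons (f := f), List.map_cons (f := g), ssumL_cons _ (by simp), ssumL_cons _ (by simp), hx.1]
      exact TEq.addCong (TEq.smulCong _ hx.2) (ih (by simp) (fun z hz => h z (by simp [hz])))

/-! ### collapse and sum congruence -/

theorem teq_combine {a c : S} {b : VType S} {R : List (S × VType S)} :
    TEq (ssumL ((a, b) :: (c, b) :: R)) (ssumL ((a + c, b) :: R)) := by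
  cases R with
  | nil => exact TEq.addSmul a c b
  | cons q R' =>
    exact TEq.trans (TEq.assoc _ _ _) (TEq.addCong (TEq.addSmul _ _ _) (TEq.refl _))

theorem teq_collapse : ∀ (P R : List (S × VType S)) (b : VType S), P ≠ [] →
    (∀ p ∈ P, AEq p.2 b) →
    TEq (ssumL (P ++ R)) (ssumL (((P.map Prod.fst).sum, b) :: R)) := by
  intro P
  induction P with
  | nil => intro R b h; exact absurd rfl h
  | cons p P ih =>
    intro R b _ hb
    cases P with
    | nil =>
      simp only [List.map_cons, List.map_nil, List.sum_cons, List.sum_nil, add_zero,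
        List.singleton_append]
      exact teq_head (hb p (by simp)).toTEq
    | cons q P' =>
      have h1 : TEq (ssumL ((p :: q :: P') ++ R)) (ssumL ((p.1, b) :: ((q :: P') ++ R))) := by
        rw [List.cons_append]
        exact teq_head (hb p (by simp)).toTEq
      have h2 := ih R b (by simp) (fun x hx => hb x (by simp [hx]))
      have h3 : TEq (ssumL ((p.1, b) :: ((q :: P') ++ R)))
          (ssumL ((p.1, b) :: ((((q :: P').map Prod.fst).sum, b) :: R))) :=
        teq_cons _ (by simp) (by simp) h2
      have h4 := teq_combine (a := p.1) (c := ((q :: P').map Prod.fst).sum) (b := b) (R := R)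
      have := (h1.trans h3).trans h4
      simpa [List.sum_cons] using this

theorem fp_filter_sum (l : List (S × VType S)) (j : QT S) :
    ((l.filter fun p => decide (cl p.2 = j)).map Prod.fst).sum = fp l j := by
  induction l with
  | nil => simp
  | cons p l ih =>
    by_cases h : cl p.2 = j
    · simp [List.filter_cons, h, Finsupp.add_apply, Finsupp.single_apply, ih]
    · simp [List.filter_cons, h, Finsupp.add_apply, Finsupp.single_apply, ih]

theorem fp_filter_ne (l : List (S × VType S)) (j j' : QT S) :
    fp (l.filter fun p => !decide (cl p.2 = j)) j' = if j' = j then 0 else fp l j' := by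
  induction l with
  | nil => simp
  | cons p l ih =>
    by_cases h' : j' = j
    · subst h'
      have ih' : fp (List.filter (fun p => !decide (cl p.2 = j')) l) j' = 0 := by simpa using ih
      by_cases h : cl p.2 = j'
      · simpa [List.filter_cons, h] using ih'
      · simp [List.filter_cons, h, Finsupp.add_apply, Finsupp.single_apply, ih']
    · by_cases h : cl p.2 = j
      · have hne : ¬ cl p.2 = j' := by rw [h]; exact Ne.symm h'
        simpa [List.filter_cons, h, h', Finsupp.add_apply, Finsupp.single_apply, hne, Ne.symm h'] using ih
      · simp [List.filter_cons, h, h', ih, Finsupp.add_apply]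

theorem cls_filter_ne (l : List (S × VType S)) (j j' : QT S) :
    j' ∈ clsList (l.filter fun p => !decide (cl p.2 = j)) ↔ j' ∈ clsList l ∧ j' ≠ j := by
  simp only [clsList, List.mem_map, List.mem_filter, Bool.not_eq_true', decide_eq_false_iff_not]
  constructor
  · rintro ⟨p, ⟨hp, hne⟩, rfl⟩
    exact ⟨⟨p, hp, rfl⟩, hne⟩
  · rintro ⟨⟨p, hp, rfl⟩, hne⟩
    exact ⟨p, ⟨hp, hne⟩, rfl⟩

theorem LEq.perm {l₁ l₂ : List (S × VType S)} (h : l₁.Perm l₂) : LEq l₁ l₂ := by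
  constructor
  · unfold fp
    exact List.Perm.sum_eq (h.map _)
  · intro j
    unfold clsList
    exact ⟨fun hm => (h.map _).mem_iff.1 hm, fun hm => (h.map _).mem_iff.2 hm⟩

/-- Key lemma: lists with equal coefficient functions and class sets have
equivalent sums. -/
theorem teq_of_LEq : ∀ (n : ℕ) (l₁ l₂ : List (S × VType S)), l₁.length ≤ n →
    LEq l₁ l₂ → l₁ ≠ [] → l₂ ≠ [] → TEq (ssumL l₁) (ssumL l₂) := by
  intro n
  induction n with
  | zero =>
    intro l₁ l₂ hlen _ h1 _
    cases l₁ with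
    | nil => exact absurd rfl h1
    | cons p l => simp at hlen
  | succ n ih =>
    intro l₁ l₂ hlen h h1 h2
    obtain ⟨p, l₁', rfl⟩ := List.exists_cons_of_ne_nil h1
    set j := cl p.2 with hj
    set f : S × VType S → Bool := fun q => decide (cl q.2 = j) with hf
    have perm1 := List.filter_append_perm f (p :: l₁')
    have perm2 := List.filter_append_perm f l₂
    set P₁ := (p :: l₁').filter f with hP₁
    set R₁ := (p :: l₁').filter (fun q => !f q) with hR₁
    set P₂ := l₂.filter f with hP₂
    set R₂ := l₂.filter (fun q => !f q) with hR₂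
    have hpP₁ : p ∈ P₁ := List.mem_filter.2 ⟨by simp, by simp [hf, hj]⟩
    have hP₁ne : P₁ ≠ [] := List.ne_nil_of_mem hpP₁
    have hjl₂ : j ∈ clsList l₂ := (h.2 j).1 (by simp [clsList, hj])
    obtain ⟨q, hq, hqc⟩ := List.mem_map.1 hjl₂
    have hqP₂ : q ∈ P₂ := List.mem_filter.2 ⟨hq, by simp [hf, hqc]⟩
    have hP₂ne : P₂ ≠ [] := List.ne_nil_of_mem hqP₂
    have haeq1 : ∀ x ∈ P₁, AEq x.2 p.2 := by
      intro x hx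
      have := (List.mem_filter.1 hx).2
      simp only [hf, decide_eq_true_eq] at this
      exact aeq_of_cl_eq this
    have haeq2 : ∀ x ∈ P₂, AEq x.2 p.2 := by
      intro x hx
      have := (List.mem_filter.1 hx).2
      simp only [hf, decide_eq_true_eq] at this
      exact aeq_of_cl_eq this
    have hs1 : (P₁.map Prod.fst).sum = fp (p :: l₁') j := fp_filter_sum _ j
    have hs2 : (P₂.map Prod.fst).sum = fp (p :: l₁') j := by
      rw [fp_filter_sum l₂ j, h.1]
    have T1 : TEq (ssumL (p :: l₁')) (ssumL ((fp (p :: l₁') j, p.2) :: R₁)) := by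
      have := teq_collapse P₁ R₁ p.2 hP₁ne haeq1
      rw [hs1] at this
      exact (teq_perm perm1).symm.trans this
    have T2 : TEq (ssumL l₂) (ssumL ((fp (p :: l₁') j, p.2) :: R₂)) := by
      have := teq_collapse P₂ R₂ p.2 hP₂ne haeq2
      rw [hs2] at this
      exact (teq_perm perm2).symm.trans this
    have hLR : LEq R₁ R₂ := by
      constructor
      · ext j'
        rw [hR₁, hR₂, hf, fp_filter_ne, fp_filter_ne, h.1]
      · intro j'
        rw [hR₁, hR₂, hf, cls_filter_ne, cls_filter_ne]
        exact and_congr_left' (h.2 j')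
    by_cases hR1e : R₁ = []
    · have hR2e : R₂ = [] := by
        cases hR2 : R₂ with
        | nil => rfl
        | cons r R₂' =>
          have : cl r.2 ∈ clsList R₂ := by rw [hR2]; simp
          have := (hLR.2 (cl r.2)).2 this
          rw [hR1e] at this
          simp at this
      rw [hR1e] at T1
      rw [hR2e] at T2
      exact T1.trans T2.symm
    · have hR2e : R₂ ≠ [] := by
        intro hR2
        obtain ⟨r, R₁', hR⟩ := List.exists_cons_of_ne_nil hR1e
        have : cl r.2 ∈ clsList R₁ := by rw [hR]; simp
        have := (hLR.2 (cl r.2)).1 this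
        rw [hR2] at this
        simp at this
      have hlen' : R₁.length ≤ n := by
        have hp1 : 1 ≤ P₁.length := by
          cases hP : P₁ with
          | nil => exact absurd hP hP₁ne
          | cons a b => simp
        have := perm1.length_eq
        rw [List.length_append] at this
        simp only [List.length_cons] at this hlen
        omega
      have T3 := teq_cons (fp (p :: l₁') j, p.2) hR1e hR2e (ih R₁ R₂ hlen' hLR hR1e hR2e)
      exact (T1.trans T3).trans T2.symm

theorem LEq_single {x y : VType S} (h : AEq x y) (a : S) : LEq [(a, x)] [(a, y)] := by
  constructor
  · simp [cl_eq_of_aeq h]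
  · intro j; simp [clsList, cl_eq_of_aeq h]

theorem LEq_map_smul (a : S) {l₁ l₂ : List (S × VType S)} (h : LEq l₁ l₂) :
    LEq (l₁.map fun p => (a * p.1, p.2)) (l₂.map fun p => (a * p.1, p.2)) := by
  constructor
  · rw [fp_map_smul, fp_map_smul, h.1]
  · intro j; rw [clsList_map_smul, clsList_map_smul]; exact h.2 j

/-- Invariance of the decomposition under type equivalence. -/
theorem LEq_dec_of_teq {T R : VType S} (h : TEq T R) : LEq (decV T) (decV R) := by
  induction h with
  | refl T => exact LEq.refl _
  | symm _ ih => exact ih.symm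
  | trans _ _ ih1 ih2 => exact ih1.trans ih2
  | oneSmul T =>
    have : (decV T).map (fun p : S × VType S => (1 * p.1, p.2)) = decV T := by
      simp [one_mul]
    rw [decV_smul, this]
    exact LEq.refl _
  | smulSmul a b T =>
    have : ((decV T).map (fun p : S × VType S => (b * p.1, p.2))).map
        (fun p : S × VType S => (a * p.1, p.2)) =
        (decV T).map (fun p : S × VType S => ((a * b) * p.1, p.2)) := by
      rw [List.map_map]
      exact List.map_congr_left (fun p _ => by simp [Function.comp, mul_assoc])
    rw [decV_smul, decV_smul, decV_smul, this]
    exact LEq.refl _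
  | smulAdd a T R =>
    rw [decV_add, decV_smul, decV_smul, decV_smul, decV_add, List.map_append]
    exact LEq.refl _
  | addSmul a b T =>
    constructor
    · rw [decV_add, decV_smul, decV_smul, decV_smul, fp_append, fp_map_smul, fp_map_smul,
        fp_map_smul, ← add_smul]
    · intro j
      rw [decV_add, decV_smul, decV_smul, decV_smul, clsList_append, clsList_map_smul,
        clsList_map_smul, clsList_map_smul]
      simp
  | comm T R =>
    constructor
    · rw [decV_add, decV_add, fp_append, fp_append, add_comm]
    · intro j
      rw [decV_add, decV_add, clsList_append, clsList_append]
      simp [or_comm]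
  | assoc T R Q =>
    rw [decV_add, decV_add, decV_add, decV_add, List.append_assoc]
    exact LEq.refl _
  | arrowCong h1 h2 _ _ => exact LEq_single (AEq.arrow h1 h2) 1
  | faCong b n h _ => exact LEq_single (AEq.fa b n h) 1
  | smulCong a _ ih => rw [decV_smul, decV_smul]; exact LEq_map_smul a ih
  | addCong _ _ ih1 ih2 =>
    constructor
    · rw [decV_add, decV_add, fp_append, fp_append, ih1.1, ih2.1]
    · intro j
      rw [decV_add, decV_add, clsList_append, clsList_append]
      simp only [List.mem_append]
      exact or_congr (ih1.2 j) (ih2.2 j)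

/-! ### transfer and pointwise lemmas -/

theorem fp_map_fun (f : VType S → VType S) (H : QT S → QT S) :
    ∀ (l : List (S × VType S)), (∀ p ∈ l, cl (f p.2) = H (cl p.2)) →
    fp (l.map fun p => (p.1, f p.2)) = Finsupp.mapDomain H (fp l) := by
  intro l
  induction l with
  | nil => simp
  | cons p l ih =>
    intro hH
    rw [List.map_cons, fp_cons, fp_cons, Finsupp.mapDomain_add, Finsupp.mapDomain_single,
      ih (fun q hq => hH q (by simp [hq])), hH p (by simp)]

theorem cls_map_fun (f : VType S → VType S) (H : QT S → QT S)
    (l : List (S × VType S)) (hH : ∀ p ∈ l, cl (f p.2) = H (cl p.2)) (j : QT S) :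
    j ∈ clsList (l.map fun p => (p.1, f p.2)) ↔ ∃ j' ∈ clsList l, H j' = j := by
  simp only [clsList, List.map_map, List.mem_map, Function.comp]
  constructor
  · rintro ⟨p, hp, rfl⟩
    exact ⟨cl p.2, ⟨p, hp, rfl⟩, (hH p hp).symm⟩
  · rintro ⟨j', ⟨p, hp, rfl⟩, rfl⟩
    exact ⟨p, hp, hH p hp⟩

theorem LEq_transfer {l₁ l₂ : List (S × VType S)} (f : VType S → VType S)
    (hc : ∀ x ∈ (l₁ ++ l₂).map Prod.snd, ∀ y ∈ (l₁ ++ l₂).map Prod.snd,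
      AEq x y → AEq (f x) (f y))
    (h : LEq l₁ l₂) :
    LEq (l₁.map fun p => (p.1, f p.2)) (l₂.map fun p => (p.1, f p.2)) := by
  set L := (l₁ ++ l₂).map Prod.snd with hL
  let H : QT S → QT S := fun j =>
    if hx : ∃ x, x ∈ L ∧ cl x = j then cl (f hx.choose) else j
  have key : ∀ x ∈ L, cl (f x) = H (cl x) := by
    intro x hx
    have he : ∃ y, y ∈ L ∧ cl y = cl x := ⟨x, hx, rfl⟩
    have : H (cl x) = cl (f he.choose) := dif_pos he
    rw [this]
    exact cl_eq_of_aeq (hc x hx he.choose he.choose_spec.1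
      (aeq_of_cl_eq he.choose_spec.2.symm))
  have k1 : ∀ p ∈ l₁, cl (f p.2) = H (cl p.2) := fun p hp =>
    key p.2 (List.mem_map.2 ⟨p, by simp [hp], rfl⟩)
  have k2 : ∀ p ∈ l₂, cl (f p.2) = H (cl p.2) := fun p hp =>
    key p.2 (List.mem_map.2 ⟨p, by simp [hp], rfl⟩)
  constructor
  · rw [fp_map_fun f H l₁ k1, fp_map_fun f H l₂ k2, h.1]
  · intro j
    rw [cls_map_fun f H l₁ k1, cls_map_fun f H l₂ k2]
    constructor
    · rintro ⟨j', hj', rfl⟩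
      exact ⟨j', (h.2 j').1 hj', rfl⟩
    · rintro ⟨j', hj', rfl⟩
      exact ⟨j', (h.2 j').2 hj', rfl⟩

theorem LEq_pointwise {l : List (S × VType S)} (f g : S × VType S → S × VType S)
    (h : ∀ p ∈ l, (f p).1 = (g p).1 ∧ AEq (f p).2 (g p).2) :
    LEq (l.map f) (l.map g) := by
  induction l with
  | nil => exact LEq.refl _
  | cons p l ih =>
    obtain ⟨ihf, ihc⟩ := ih (fun q hq => h q (by simp [hq]))
    have hp := h p (by simp)
    constructor
    · rw [List.map_cons, List.map_cons, fp_cons, fp_cons, ihf, hp.1, cl_eq_of_aeq hp.2]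
    · intro j
      rw [List.map_cons, List.map_cons, clsList_cons, clsList_cons, cl_eq_of_aeq hp.2]
      simp only [List.mem_cons]
      exact or_congr Iff.rfl (ihc j)

/-! ### substitution and unit lemmas -/

theorem teq_subst {T R : VType S} (v : Bool × ℕ) (A : VType S) (h : TEq T R) :
    TEq (substT T v A) (substT R v A) := by
  induction h with
  | refl T => exact TEq.refl _
  | symm _ ih => exact ih.symm
  | trans _ _ ih1 ih2 => exact ih1.trans ih2
  | oneSmul T => exact TEq.oneSmul _
  | smulSmul a b T => exact TEq.smulSmul _ _ _
  | smulAdd a T R => exact TEq.smulAdd _ _ _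
  | addSmul a b T => exact TEq.addSmul _ _ _
  | comm T R => exact TEq.comm _ _
  | assoc T R Q => exact TEq.assoc _ _ _
  | arrowCong _ _ ih1 ih2 => exact TEq.arrowCong ih1 ih2
  | @faCong b n T R h ih =>
    show TEq (substT (VType.fa b n T) v A) (substT (VType.fa b n R) v A)
    by_cases hv : v = (b, n)
    · simp only [substT, if_pos hv]
      exact TEq.faCong b n h
    · simp only [substT, if_neg hv]
      exact TEq.faCong b n ih
  | smulCong a _ ih => exact TEq.smulCong a ih
  | addCong _ _ ih1 ih2 => exact TEq.addCong ih1 ih2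

theorem isUnit_subst {U : VType S} (h : VType.IsUnit U) (v : Bool × ℕ) (A : VType S)
    (hk : VType.kindOK v A) : VType.IsUnit (substT U v A) := by
  induction h with
  | uvar n =>
    show VType.IsUnit (if v = (true, n) then A else VType.uvar n)
    split
    · rename_i hv
      exact hk (by rw [hv])
    · exact VType.IsUnit.uvar n
  | @arrow U T hU ih => exact VType.IsUnit.arrow ih
  | @fa b n U hU ih =>
    show VType.IsUnit (if v = (b, n) then VType.fa b n U else VType.fa b n (substT U v A))
    split
    · exact VType.IsUnit.fa hU
    · exact VType.IsUnit.fa ih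

theorem atom_of_isUnit {U : VType S} (h : VType.IsUnit U) : VAtom U := by
  cases h <;> trivial

theorem aeq_of_atoms {T R : VType S} (hT : VAtom T) (hR : VAtom R) (h : TEq T R) :
    AEq T R := by
  have hL := LEq_dec_of_teq h
  rw [dec_of_atom hT, dec_of_atom hR] at hL
  have := (hL.2 (cl T)).1 (by simp [clsList])
  simp only [clsList, List.map_cons, List.map_nil, List.mem_singleton] at this
  exact aeq_of_cl_eq this

theorem dec_ssumL {l : List (S × VType S)} (h : ∀ p ∈ l, VAtom p.2) (h0 : l ≠ []) :
    decV (ssumL l) = l := by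
  induction l with
  | nil => exact absurd rfl h0
  | cons p l ih =>
    cases l with
    | nil =>
      show decV (VType.smul p.1 p.2) = [p]
      rw [decV_smul, dec_of_atom (h p (by simp))]
      simp
    | cons q l' =>
      show decV (VType.add (VType.smul p.1 p.2) (ssumL (q :: l'))) = p :: q :: l'
      rw [decV_add, decV_smul, dec_of_atom (h p (by simp)),
        ih (fun x hx => h x (by simp [hx])) (by simp)]
      simp

/-! ### the picking function -/

noncomputable def pickF (g : VType S → VType S) (l₀ : List (S × VType S))
    (W : VType S) : VType S :=
  if hw : ∃ w, w ∈ l₀ ∧ AEq (g w.2) W then hw.choose.2 else W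

theorem pickF_spec (g : VType S → VType S) (l₀ : List (S × VType S)) (W : VType S)
    (hex : ∃ w, w ∈ l₀ ∧ AEq (g w.2) W) :
    (∃ w ∈ l₀, w.2 = pickF g l₀ W) ∧ AEq (g (pickF g l₀ W)) W := by
  unfold pickF
  rw [dif_pos hex]
  exact ⟨⟨hex.choose, hex.choose_spec.1, rfl⟩, hex.choose_spec.2⟩

/-! ### shape helpers for the ∀-elimination case -/

def sbF (v : Bool × ℕ) (A : VType S) : VType S → VType S
  | .fa _ _ U => VType.substT U v A
  | X => X

@[simp] theorem sbF_fa (v : Bool × ℕ) (A : VType S) (b : Bool) (n : ℕ) (U : VType S) :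
    sbF v A (VType.fa b n U) = VType.substT U v A := rfl

/-! ### the main generation lemma -/

theorem gen_aux : ∀ {Γ : Ctx S} {s : VTerm S} {T : VType S}, Typing Γ s T →
    ∀ α t, s = VTerm.smul α t → ∃ R, TEq T (VType.smul α R) ∧ Typing Γ t R := by
  intro Γ s T h
  induction h with
  | ax _ _ => intro α t0 he; simp at he
  | zeroI _ => intro α t0 he; simp at he
  | arrI _ _ => intro α t0 he; simp at he
  | arrE U Xs p ps q qs _ _ _ _ _ _ => intro α t0 he; simp at he
  | addI _ _ => intro α t0 he; simp at he
  | smulI a hpre ih =>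
    intro α t0 he
    injection he with h1 h2
    subst h1; subst h2
    exact ⟨_, TEq.refl _, hpre⟩
  | equiv hpre hTR ih =>
    intro α t0 he
    obtain ⟨R0, h1, h2⟩ := ih α t0 he
    exact ⟨R0, hTR.symm.trans h1, h2⟩
  | @faI Γ t v p ps hvΓ hunits hty ih =>
    intro α t0 he
    obtain ⟨R, hR1, hR2⟩ := ih α t0 he
    have hat : ∀ w ∈ p :: ps, VAtom w.2 := fun w hw => atom_of_isUnit (hunits w hw)
    have hkey : LEq (p :: ps) ((decV R).map fun w => (α * w.1, w.2)) := by
      have h1 := LEq_dec_of_teq hR1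
      rwa [dec_ssumL hat (by simp), decV_smul] at h1
    have hpick : ∀ w ∈ decV R,
        AEq (pickF id (p :: ps) w.2) w.2 ∧ VType.IsUnit (pickF id (p :: ps) w.2) := by
      intro w hw
      have hcls : cl w.2 ∈ clsList (p :: ps) := by
        refine (hkey.2 (cl w.2)).2 ?_
        exact List.mem_map.2 ⟨(α * w.1, w.2), List.mem_map.2 ⟨w, hw, rfl⟩, rfl⟩
      obtain ⟨u, hu, huc⟩ := List.mem_map.1 hcls
      have hex : ∃ u', u' ∈ (p :: ps) ∧ AEq (id u'.2) w.2 := ⟨u, hu, aeq_of_cl_eq huc⟩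
      obtain ⟨⟨u', hu', hue⟩, haeq⟩ := pickF_spec id (p :: ps) w.2 hex
      exact ⟨haeq, hue ▸ hunits u' hu'⟩
    have hl'ne : (decV R).map (fun w => (w.1, pickF id (p :: ps) w.2)) ≠ [] := by
      cases hd : decV R with
      | nil => exact absurd hd (dec_ne_nil R)
      | cons a b => simp
    have hRl' : TEq R (ssumL ((decV R).map (fun w => (w.1, pickF id (p :: ps) w.2)))) := by
      refine (teq_ssumL_dec R).trans ?_
      have h := teq_ssumL_map (l := decV R) (fun w => w)
        (fun w => (w.1, pickF id (p :: ps) w.2)) (dec_ne_nil R)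
        (fun w hw => ⟨rfl, ((hpick w hw).1.symm).toTEq⟩)
      rwa [List.map_id'] at h
    have htyl' : Typing Γ t0
        (ssumL ((decV R).map (fun w => (w.1, pickF id (p :: ps) w.2)))) :=
      Typing.equiv hR2 hRl'
    obtain ⟨p', ps', hl'eq⟩ := List.exists_cons_of_ne_nil hl'ne
    have hunits' : ∀ w ∈ p' :: ps', VType.IsUnit w.2 := by
      intro w hw
      rw [← hl'eq] at hw
      obtain ⟨w0, hw0, rfl⟩ := List.mem_map.1 hw
      exact (hpick w0 hw0).2
    have hfa : Typing Γ t0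
        (ssumL (((decV R).map (fun w => (w.1, pickF id (p :: ps) w.2))).map
          (fun w => (w.1, VType.fa v.1 v.2 w.2)))) := by
      rw [hl'eq]
      exact Typing.faI v p' ps' hvΓ hunits' (by rw [← hl'eq]; exact htyl')
    refine ⟨ssumL (((decV R).map (fun w => (w.1, pickF id (p :: ps) w.2))).map
      (fun w => (w.1, VType.fa v.1 v.2 w.2))), ?_, hfa⟩
    have hmapne : ((decV R).map (fun w => (w.1, pickF id (p :: ps) w.2))).map
        (fun w => (w.1, VType.fa v.1 v.2 w.2)) ≠ [] := by
      cases hd : decV R with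
      | nil => exact absurd hd (dec_ne_nil R)
      | cons a b => simp
    refine TEq.trans ?_ (teq_smul_ssumL α hmapne).symm
    have step1 : LEq ((p :: ps).map (fun w => (w.1, VType.fa v.1 v.2 w.2)))
        (((decV R).map (fun w => (α * w.1, w.2))).map
          (fun w => (w.1, VType.fa v.1 v.2 w.2))) :=
      LEq_transfer (VType.fa v.1 v.2)
        (fun x _ y _ hxy => AEq.fa v.1 v.2 hxy.toTEq) hkey
    have step2 : LEq
        (((decV R).map (fun w => (α * w.1, w.2))).map
          (fun w => (w.1, VType.fa v.1 v.2 w.2)))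
        ((decV R).map (fun w => (α * w.1, VType.fa v.1 v.2 (pickF id (p :: ps) w.2)))) := by
      rw [List.map_map]
      exact LEq_pointwise _ _ (fun w hw =>
        ⟨rfl, AEq.fa v.1 v.2 ((hpick w hw).1.symm.toTEq)⟩)
    have e2 : (((decV R).map (fun w => (w.1, pickF id (p :: ps) w.2))).map
          (fun w => (w.1, VType.fa v.1 v.2 w.2))).map (fun w => (α * w.1, w.2)) =
        (decV R).map (fun w => (α * w.1, VType.fa v.1 v.2 (pickF id (p :: ps) w.2))) := by
      simp [List.map_map, Function.comp]
    refine teq_of_LEq (((p :: ps).map (fun w => (w.1, VType.fa v.1 v.2 w.2))).length)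
      _ _ le_rfl ?_ (by simp) ?_
    · rw [e2]
      exact step1.trans step2
    · rw [e2]
      cases hd : decV R with
      | nil => exact absurd hd (dec_ne_nil R)
      | cons a b => simp
  | @faE Γ t v A p ps hk hunits hty ih =>
    intro α t0 he
    obtain ⟨R, hR1, hR2⟩ := ih α t0 he
    have hat : ∀ w ∈ (p :: ps).map (fun w => (w.1, VType.fa v.1 v.2 w.2)), VAtom w.2 := by
      intro w hw
      obtain ⟨w0, hw0, rfl⟩ := List.mem_map.1 hw
      trivial
    have hkey : LEq ((p :: ps).map (fun w => (w.1, VType.fa v.1 v.2 w.2)))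
        ((decV R).map fun w => (α * w.1, w.2)) := by
      have h1 := LEq_dec_of_teq hR1
      rwa [dec_ssumL hat (by simp), decV_smul] at h1
    have hpick : ∀ w ∈ decV R,
        AEq (VType.fa v.1 v.2 (pickF (VType.fa v.1 v.2) (p :: ps) w.2)) w.2 ∧
          VType.IsUnit (pickF (VType.fa v.1 v.2) (p :: ps) w.2) := by
      intro w hw
      have hcls : cl w.2 ∈ clsList ((p :: ps).map (fun w => (w.1, VType.fa v.1 v.2 w.2))) := by
        refine (hkey.2 (cl w.2)).2 ?_
        exact List.mem_map.2 ⟨(α * w.1, w.2), List.mem_map.2 ⟨w, hw, rfl⟩, rfl⟩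
      obtain ⟨u, hu, huc⟩ := List.mem_map.1 hcls
      obtain ⟨u0, hu0, rfl⟩ := List.mem_map.1 hu
      have hex : ∃ u', u' ∈ (p :: ps) ∧ AEq (VType.fa v.1 v.2 u'.2) w.2 :=
        ⟨u0, hu0, aeq_of_cl_eq huc⟩
      obtain ⟨⟨u', hu', hue⟩, haeq⟩ := pickF_spec (VType.fa v.1 v.2) (p :: ps) w.2 hex
      exact ⟨haeq, hue ▸ hunits u' hu'⟩
    have hl'ne : (decV R).map (fun w => (w.1, pickF (VType.fa v.1 v.2) (p :: ps) w.2)) ≠ [] := by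
      cases hd : decV R with
      | nil => exact absurd hd (dec_ne_nil R)
      | cons a b => simp
    have hRl' : TEq R (ssumL (((decV R).map
        (fun w => (w.1, pickF (VType.fa v.1 v.2) (p :: ps) w.2))).map
        (fun w => (w.1, VType.fa v.1 v.2 w.2)))) := by
      refine (teq_ssumL_dec R).trans ?_
      have h := teq_ssumL_map (l := decV R) (fun w => w)
        (fun w => (w.1, VType.fa v.1 v.2 (pickF (VType.fa v.1 v.2) (p :: ps) w.2)))
        (dec_ne_nil R) (fun w hw => ⟨rfl, ((hpick w hw).1.symm).toTEq⟩)
      rw [List.map_id'] at h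
      rw [List.map_map]
      exact h
    have htyl' : Typing Γ t0 (ssumL (((decV R).map
        (fun w => (w.1, pickF (VType.fa v.1 v.2) (p :: ps) w.2))).map
        (fun w => (w.1, VType.fa v.1 v.2 w.2)))) := Typing.equiv hR2 hRl'
    obtain ⟨p', ps', hl'eq⟩ := List.exists_cons_of_ne_nil hl'ne
    have hunits' : ∀ w ∈ p' :: ps', VType.IsUnit w.2 := by
      intro w hw
      rw [← hl'eq] at hw
      obtain ⟨w0, hw0, rfl⟩ := List.mem_map.1 hw
      exact (hpick w0 hw0).2
    have hfaE : Typing Γ t0 (ssumL (((decV R).map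
        (fun w => (w.1, pickF (VType.fa v.1 v.2) (p :: ps) w.2))).map
        (fun w => (w.1, VType.substT w.2 v A)))) := by
      rw [hl'eq]
      exact Typing.faE v A p' ps' hk hunits' (by rw [← hl'eq]; exact htyl')
    refine ⟨ssumL (((decV R).map
      (fun w => (w.1, pickF (VType.fa v.1 v.2) (p :: ps) w.2))).map
      (fun w => (w.1, VType.substT w.2 v A))), ?_, hfaE⟩
    have hmapne : ((decV R).map
        (fun w => (w.1, pickF (VType.fa v.1 v.2) (p :: ps) w.2))).map
        (fun w => (w.1, VType.substT w.2 v A)) ≠ [] := by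
      cases hd : decV R with
      | nil => exact absurd hd (dec_ne_nil R)
      | cons a b => simp
    refine TEq.trans ?_ (teq_smul_ssumL α hmapne).symm
    -- abbreviations
    have step2 : LEq ((decV R).map fun w => (α * w.1, w.2))
        ((decV R).map (fun w =>
          (α * w.1, VType.fa v.1 v.2 (pickF (VType.fa v.1 v.2) (p :: ps) w.2)))) :=
      LEq_pointwise _ _ (fun w hw => ⟨rfl, (hpick w hw).1.symm⟩)
    have hkey2 : LEq ((p :: ps).map (fun w => (w.1, VType.fa v.1 v.2 w.2)))
        ((decV R).map (fun w =>
          (α * w.1, VType.fa v.1 v.2 (pickF (VType.fa v.1 v.2) (p :: ps) w.2)))) :=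
      hkey.trans step2
    -- apply transfer with the substitution-in-the-body function
    have hshape : ∀ x ∈ (((p :: ps).map (fun w => (w.1, VType.fa v.1 v.2 w.2))) ++
        ((decV R).map (fun w =>
          (α * w.1, VType.fa v.1 v.2 (pickF (VType.fa v.1 v.2) (p :: ps) w.2))))).map Prod.snd,
        ∃ u, VType.IsUnit u ∧ x = VType.fa v.1 v.2 u := by
      intro x hx
      obtain ⟨w, hw, rfl⟩ := List.mem_map.1 hx
      rcases List.mem_append.1 hw with hw | hw
      · obtain ⟨w0, hw0, rfl⟩ := List.mem_map.1 hw
        exact ⟨w0.2, hunits w0 hw0, rfl⟩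
      · obtain ⟨w0, hw0, rfl⟩ := List.mem_map.1 hw
        exact ⟨_, (hpick w0 hw0).2, rfl⟩
    have htrans := LEq_transfer (sbF v A) (fun x hx y hy hxy => by
      obtain ⟨u, hu, rfl⟩ := hshape x hx
      obtain ⟨u', hu', hy'⟩ := hshape y hy
      subst hy'
      cases hxy with
      | refl => exact AEq.refl _
      | fa b n hTR =>
        rw [sbF_fa, sbF_fa]
        exact aeq_of_atoms (atom_of_isUnit (isUnit_subst hu v A hk))
          (atom_of_isUnit (isUnit_subst hu' v A hk)) (teq_subst v A hTR)) hkey2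
    have e1 : ((p :: ps).map (fun w => (w.1, VType.fa v.1 v.2 w.2))).map
        (fun w => (w.1, sbF v A w.2)) =
        (p :: ps).map (fun w => (w.1, VType.substT w.2 v A)) := by
      simp [List.map_map, Function.comp]
    have e2 : ((decV R).map (fun w =>
        (α * w.1, VType.fa v.1 v.2 (pickF (VType.fa v.1 v.2) (p :: ps) w.2)))).map
        (fun w => (w.1, sbF v A w.2)) =
        (((decV R).map
          (fun w => (w.1, pickF (VType.fa v.1 v.2) (p :: ps) w.2))).map
          (fun w => (w.1, VType.substT w.2 v A))).map (fun w => (α * w.1, w.2)) := by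
      simp [List.map_map, Function.comp]
    rw [e1, e2] at htrans
    refine teq_of_LEq (((p :: ps).map (fun w => (w.1, VType.substT w.2 v A))).length)
      _ _ le_rfl htrans (by simp) ?_
    cases hd : decV R with
    | nil => exact absurd hd (dec_ne_nil R)
    | cons a b => simp

end ScalarGen



/-- Scalar generation lemma. -/
theorem scalars_generation {S : Type} [CommRing S] {Γ : Ctx S} {t : VTerm S}
    {T : VType S} (α : S) (h : Typing Γ (VTerm.smul α t) T) :
    ∃ R : VType S, TEq T (VType.smul α R) ∧ Typing Γ t R :=
  ScalarGen.gen_aux h α t rfl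
end

section
/- Type for zero: if t = 0 or t = α·0 and Γ ⊢ t : T is derivable in λ^vec, then there exists a type R with T ≡ 0·R. -/
/-!
Formalization of the vectorial λ-calculus (Arrighi, Díaz-Caro, Valiron):
syntax of types and terms, type equivalence, typing rules, reduction, etc.
-/

universe u

/-! ### Auxiliary development for the "type for zero" theorem -/

section TypeForZeroAux
set_option linter.unusedSectionVars false

open VType

variable {S : Type} [CommRing S]

instance tySetoid (S : Type) [CommRing S] : Setoid (VType S) :=
  ⟨TEq, TEq.refl, fun h => h.symm, fun h1 h2 => h1.trans h2⟩

abbrev TyQ (S : Type) [CommRing S] := Quotient (tySetoid S)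

/-- Normal form of a type: a formal linear combination over TEq-classes. -/
noncomputable def nf : VType S → (TyQ S →₀ S)
  | .uvar n => Finsupp.single ⟦VType.uvar n⟧ 1
  | .gvar n => Finsupp.single ⟦VType.gvar n⟧ 1
  | .arrow U T => Finsupp.single ⟦VType.arrow U T⟧ 1
  | .fa b n U => Finsupp.single ⟦VType.fa b n U⟧ 1
  | .smul a T => a • nf T
  | .add T R => nf T + nf R

theorem nf_sound {T R : VType S} (h : TEq T R) : nf T = nf R := by
  induction h with
  | refl => rfl
  | symm _ ih => exact ih.symm
  | trans _ _ ih1 ih2 => exact ih1.trans ih2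
  | oneSmul T => simp [nf]
  | smulSmul a b T => simp [nf, smul_smul]
  | smulAdd a T R => simp [nf, smul_add]
  | addSmul a b T => simp [nf, add_smul]
  | comm T R => simp [nf, add_comm]
  | assoc T R Q => simp [nf, add_assoc]
  | arrowCong h1 h2 =>
      simp only [nf]
      congr 1
      exact Quotient.sound (TEq.arrowCong h1 h2)
  | faCong b n h =>
      simp only [nf]
      congr 1
      exact Quotient.sound (TEq.faCong b n h)
  | smulCong a _ ih => simp [nf, ih]
  | addCong _ _ ih1 ih2 => simp [nf, ih1, ih2]

/-- Substitution respects type equivalence. -/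
theorem teq_subst {T R : VType S} (h : TEq T R) (v : Bool × ℕ) (A : VType S) :
    TEq (T.substT v A) (R.substT v A) := by
  induction h with
  | refl => exact TEq.refl _
  | symm _ ih => exact ih.symm
  | trans _ _ ih1 ih2 => exact ih1.trans ih2
  | oneSmul T => exact TEq.oneSmul _
  | smulSmul a b T => exact TEq.smulSmul _ _ _
  | smulAdd a T R => exact TEq.smulAdd _ _ _
  | addSmul a b T => exact TEq.addSmul _ _ _
  | comm T R => exact TEq.comm _ _
  | assoc T R Q => exact TEq.assoc _ _ _
  | arrowCong _ _ ih1 ih2 => exact TEq.arrowCong ih1 ih2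
  | @faCong b n T R h ih =>
      simp only [VType.substT]
      split
      · exact TEq.faCong _ _ h
      · exact TEq.faCong _ _ ih
  | smulCong a _ ih => exact TEq.smulCong _ ih
  | addCong _ _ ih1 ih2 => exact TEq.addCong ih1 ih2

/-- The "∀-elimination" map on TEq-classes, substituting `A` for `v` under a
top-level binder of `v`. -/
noncomputable def opn (v : Bool × ℕ) (A : VType S) : VType S → TyQ S
  | .uvar n => ⟦VType.uvar n⟧
  | .gvar n => ⟦VType.gvar n⟧
  | .arrow U T => ⟦VType.arrow U T⟧
  | .fa b n U => if v = (b, n) then ⟦U.substT v A⟧ else ⟦VType.fa b n U⟧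
  | .smul a T => Quotient.map (VType.smul a) (fun _ _ h => TEq.smulCong a h) (opn v A T)
  | .add T R => Quotient.map₂ VType.add (fun _ _ h1 _ _ h2 => TEq.addCong h1 h2)
      (opn v A T) (opn v A R)

theorem opn_sound (v : Bool × ℕ) (A : VType S) {T R : VType S} (h : TEq T R) :
    opn v A T = opn v A R := by
  induction h with
  | refl => rfl
  | symm _ ih => exact ih.symm
  | trans _ _ ih1 ih2 => exact ih1.trans ih2
  | oneSmul T =>
      simp only [opn]
      induction opn v A T using Quotient.ind
      exact Quotient.sound (TEq.oneSmul _)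
  | smulSmul a b T =>
      simp only [opn]
      induction opn v A T using Quotient.ind
      exact Quotient.sound (TEq.smulSmul _ _ _)
  | smulAdd a T R =>
      simp only [opn]
      induction opn v A T using Quotient.ind
      induction opn v A R using Quotient.ind
      exact Quotient.sound (TEq.smulAdd _ _ _)
  | addSmul a b T =>
      simp only [opn]
      induction opn v A T using Quotient.ind
      exact Quotient.sound (TEq.addSmul _ _ _)
  | comm T R =>
      simp only [opn]
      induction opn v A T using Quotient.ind
      induction opn v A R using Quotient.ind
      exact Quotient.sound (TEq.comm _ _)
  | assoc T R Q =>
      simp only [opn]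
      induction opn v A T using Quotient.ind
      induction opn v A R using Quotient.ind
      induction opn v A Q using Quotient.ind
      exact Quotient.sound (TEq.assoc _ _ _)
  | arrowCong h1 h2 =>
      simp only [opn]
      exact Quotient.sound (TEq.arrowCong h1 h2)
  | @faCong b n T R h ih =>
      simp only [opn]
      split
      · exact Quotient.sound (teq_subst h v A)
      · exact Quotient.sound (TEq.faCong b n h)
  | smulCong a _ ih => simp only [opn, ih]
  | addCong _ _ ih1 ih2 => simp only [opn, ih1, ih2]

noncomputable def opnQ (v : Bool × ℕ) (A : VType S) : TyQ S → TyQ S :=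
  Quotient.lift (opn v A) (fun _ _ h => opn_sound v A h)

noncomputable def faQ (b : Bool) (n : ℕ) : TyQ S → TyQ S :=
  Quotient.map (VType.fa b n) (fun _ _ h => TEq.faCong b n h)

theorem nf_ssumL (l : List (S × VType S)) :
    nf (VType.ssumL l) = (l.map fun w => w.1 • nf w.2).sum := by
  induction l with
  | nil => simp [VType.ssumL, nf]
  | cons p l ih =>
      cases l with
      | nil => simp [VType.ssumL, nf]
      | cons q l =>
          simp only [VType.ssumL, nf, List.map_cons, List.sum_cons] at *
          rw [ih]

theorem nf_unit {U : VType S} (h : VType.IsUnit U) :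
    nf U = Finsupp.single (⟦U⟧ : TyQ S) 1 := by
  cases h <;> rfl

theorem isUnit_subst {U : VType S} (h : VType.IsUnit U) (v : Bool × ℕ) {A : VType S}
    (hA : VType.kindOK v A) : VType.IsUnit (U.substT v A) := by
  induction h with
  | uvar n =>
      simp only [VType.substT]
      split
      · rename_i hv
        exact hA (by rw [hv])
      · exact VType.IsUnit.uvar n
  | arrow h ih => exact VType.IsUnit.arrow ih
  | fa h ih =>
      simp only [VType.substT]
      split
      · exact VType.IsUnit.fa h
      · exact VType.IsUnit.fa ih

theorem nf_subst_unit {U : VType S} (h : VType.IsUnit U) (v : Bool × ℕ) {A : VType S}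
    (hA : VType.kindOK v A) :
    nf (U.substT v A) = Finsupp.single (⟦U.substT v A⟧ : TyQ S) 1 :=
  nf_unit (isUnit_subst h v hA)

/-- Pushing a linear map over the keys of a sum of singles. -/
theorem nf_map_zero (g : TyQ S → TyQ S) (F G : S × VType S → VType S)
    (l : List (S × VType S))
    (h1 : ∀ w ∈ l, ∃ k : TyQ S, nf (F w) = Finsupp.single k 1 ∧
      nf (G w) = Finsupp.single (g k) 1)
    (h0 : nf (VType.ssumL (l.map fun w => (w.1, F w))) = 0) :
    nf (VType.ssumL (l.map fun w => (w.1, G w))) = 0 := by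
  rw [nf_ssumL] at h0 ⊢
  have key : ∀ l' : List (S × VType S), (∀ w ∈ l', ∃ k : TyQ S,
      nf (F w) = Finsupp.single k 1 ∧ nf (G w) = Finsupp.single (g k) 1) →
      ((l'.map fun w => (w.1, G w)).map fun w => w.1 • nf w.2).sum =
      Finsupp.mapDomain g ((l'.map fun w => (w.1, F w)).map fun w => w.1 • nf w.2).sum := by
    intro l' hl'
    induction l' with
    | nil => simp
    | cons w l' ih =>
        obtain ⟨k, hF, hG⟩ := hl' w (List.mem_cons_self)
        simp only [List.map_cons, List.sum_cons, Finsupp.mapDomain_add]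
        rw [ih (fun w hw => hl' w (List.mem_cons_of_mem _ hw)), hF, hG,
          Finsupp.mapDomain_smul, Finsupp.mapDomain_single]
  rw [key l h1, h0, Finsupp.mapDomain_zero]

/-! #### Reconstruction: a type with zero normal form is equivalent to `0·R`. -/

/-- `tyS A ps` = `A + Σᵢ aᵢ·Tᵢ`, left-associated. -/
def tyS (A : VType S) (ps : List (S × VType S)) : VType S :=
  ps.foldl (fun acc p => VType.add acc (VType.smul p.1 p.2)) A

theorem tyS_headCong {A B : VType S} (h : TEq A B) (ps : List (S × VType S)) :
    TEq (tyS A ps) (tyS B ps) := by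
  induction ps generalizing A B with
  | nil => exact h
  | cons p ps ih => exact ih (TEq.addCong h (TEq.refl _))

/-- AC lemma: (A + X) + Y ≡ (A + Y) + X. -/
theorem teq_rotate (A X Y : VType S) :
    TEq (VType.add (VType.add A X) Y) (VType.add (VType.add A Y) X) :=
  ((TEq.assoc A X Y).symm.trans
    (TEq.addCong (TEq.refl A) (TEq.comm X Y))).trans (TEq.assoc A Y X)

theorem tyS_add_left (A B : VType S) (ps : List (S × VType S)) :
    TEq (VType.add (tyS A ps) B) (tyS (VType.add A B) ps) := by
  induction ps generalizing A with
  | nil => exact TEq.refl _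
  | cons p ps ih =>
      exact (ih (VType.add A (VType.smul p.1 p.2))).trans
        (tyS_headCong (teq_rotate A _ B) ps)

theorem tyS_add_right (X B : VType S) (qs : List (S × VType S)) :
    TEq (VType.add X (tyS B qs)) (tyS (VType.add X B) qs) := by
  induction qs generalizing B with
  | nil => exact TEq.refl _
  | cons q qs ih =>
      exact (ih (VType.add B (VType.smul q.1 q.2))).trans
        (tyS_headCong (TEq.assoc X B _) qs)

theorem tyS_append (A B : VType S) (ps qs : List (S × VType S)) :
    TEq (VType.add (tyS A ps) (tyS B qs)) (tyS (VType.add A B) (ps ++ qs)) := by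
  show TEq _ (List.foldl _ _ (ps ++ qs))
  rw [List.foldl_append]
  exact (tyS_add_right (tyS A ps) B qs).trans
    (tyS_headCong (tyS_add_left A B ps) qs)

theorem tyS_smul (a : S) (A : VType S) (ps : List (S × VType S)) :
    TEq (VType.smul a (tyS A ps))
      (tyS (VType.smul a A) (ps.map fun p => (a * p.1, p.2))) := by
  induction ps generalizing A with
  | nil => exact TEq.refl _
  | cons p ps ih =>
      simp only [List.map_cons]
      have h2 : TEq (VType.smul a (VType.add A (VType.smul p.1 p.2)))
          (VType.add (VType.smul a A) (VType.smul (a * p.1) p.2)) :=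
        (TEq.smulAdd a A (VType.smul p.1 p.2)).symm.trans
          (TEq.addCong (TEq.refl _) (TEq.smulSmul a p.1 p.2))
      exact (ih (VType.add A (VType.smul p.1 p.2))).trans
        (tyS_headCong h2 (ps.map fun p => (a * p.1, p.2)))

theorem tyS_perm {ps qs : List (S × VType S)} (h : ps.Perm qs) (A : VType S) :
    TEq (tyS A ps) (tyS A qs) := by
  induction h generalizing A with
  | nil => exact TEq.refl _
  | cons x _ ih => exact ih _
  | swap x y l => exact tyS_headCong (teq_rotate A _ _) l
  | trans _ _ ih1 ih2 => exact (ih1 A).trans (ih2 A)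

/-- Decomposition of an arbitrary type as `0·R + Σ aᵢ·Tᵢ` matching its nf. -/
theorem decomp (T : VType S) :
    ∃ (R : VType S) (ps : List (S × VType S)),
      TEq T (tyS (VType.smul 0 R) ps) ∧
      nf T = (ps.map fun p => p.1 • Finsupp.single (⟦p.2⟧ : TyQ S) 1).sum := by
  have base : ∀ B : VType S, nf B = Finsupp.single (⟦B⟧ : TyQ S) 1 →
      ∃ (R : VType S) (ps : List (S × VType S)),
        TEq B (tyS (VType.smul 0 R) ps) ∧
        nf B = (ps.map fun p => p.1 • Finsupp.single (⟦p.2⟧ : TyQ S) 1).sum := by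
    intro B hB
    refine ⟨B, [(1, B)], ?_, by simp [hB]⟩
    have h1 : TEq (tyS (VType.smul 0 B) [(1, B)]) B := by
      show TEq (VType.add (VType.smul 0 B) (VType.smul 1 B)) B
      refine (TEq.addSmul 0 1 B).trans ?_
      rw [zero_add]
      exact TEq.oneSmul B
    exact h1.symm
  induction T with
  | uvar n => exact base _ rfl
  | gvar n => exact base _ rfl
  | arrow U T ihU ihT => exact base _ rfl
  | fa b n U ih => exact base _ rfl
  | smul a T ih =>
      obtain ⟨R, ps, hEq, hnf⟩ := ih
      refine ⟨R, ps.map fun p => (a * p.1, p.2), ?_, ?_⟩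
      · refine (TEq.smulCong a hEq).trans ((tyS_smul a _ ps).trans (tyS_headCong ?_ _))
        have : TEq (VType.smul a (VType.smul 0 R)) (VType.smul (a * 0) R) :=
          TEq.smulSmul a 0 R
        rwa [mul_zero] at this
      · show nf (VType.smul a T) = _
        simp only [nf, hnf, List.map_map, List.smul_sum]
        congr 1
        ext p
        simp [smul_smul]
  | add T R ihT ihR =>
      obtain ⟨R1, ps, hEq1, hnf1⟩ := ihT
      obtain ⟨R2, qs, hEq2, hnf2⟩ := ihR
      refine ⟨VType.add R1 R2, ps ++ qs, ?_, ?_⟩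
      · refine (TEq.addCong hEq1 hEq2).trans ((tyS_append _ _ ps qs).trans
          (tyS_headCong (TEq.smulAdd 0 R1 R2) _))
      · show nf (VType.add T R) = _
        simp [nf, hnf1, hnf2]

open Classical in
/-- Folding a block of summands with TEq-equal bodies into a single summand. -/
theorem tyS_block (B : VType S) :
    ∀ (l : List (S × VType S)) (q : S × VType S) (A : VType S),
      (∀ w ∈ q :: l, TEq w.2 B) →
      TEq (tyS A (q :: l)) (VType.add A (VType.smul ((q :: l).map Prod.fst).sum B)) := by
  intro l
  induction l with
  | nil =>
      intro q A hq
      show TEq (VType.add A (VType.smul q.1 q.2)) _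
      simp only [List.map_cons, List.map_nil, List.sum_cons, List.sum_nil, add_zero]
      exact TEq.addCong (TEq.refl A) (TEq.smulCong q.1 (hq q (List.mem_cons_self)))
  | cons q' l ih =>
      intro q A hq
      have step : TEq (tyS (VType.add A (VType.smul q.1 q.2)) (q' :: l))
          (VType.add (VType.add A (VType.smul q.1 q.2))
            (VType.smul ((q' :: l).map Prod.fst).sum B)) :=
        ih q' _ (fun w hw => hq w (List.mem_cons_of_mem _ hw))
      refine step.trans ?_
      refine (TEq.assoc A _ _).symm.trans ?_
      simp only [List.map_cons, List.sum_cons]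
      exact TEq.addCong (TEq.refl A)
        ((TEq.addCong (TEq.smulCong q.1 (hq q (List.mem_cons_self)))
          (TEq.refl _)).trans (TEq.addSmul q.1 _ B))

open Classical in
theorem sum_block_eval (k : TyQ S) (l : List (S × VType S)) :
    ((l.map fun p => p.1 • Finsupp.single (⟦p.2⟧ : TyQ S) (1 : S)).sum) k =
      ((l.filter fun p => decide ((⟦p.2⟧ : TyQ S) = k)).map Prod.fst).sum := by
  induction l with
  | nil => simp
  | cons p l ih =>
      rw [List.map_cons, List.sum_cons, List.filter_cons, Finsupp.add_apply,
        Finsupp.smul_apply, ih]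
      by_cases hp : (⟦p.2⟧ : TyQ S) = k
      · simp [hp, Finsupp.single_apply]
      · simp [hp, Finsupp.single_apply]

theorem sum_block_const (k : TyQ S) (l : List (S × VType S))
    (hl : ∀ p ∈ l, (⟦p.2⟧ : TyQ S) = k) :
    (l.map fun p => p.1 • Finsupp.single (⟦p.2⟧ : TyQ S) (1 : S)).sum =
      ((l.map Prod.fst).sum) • Finsupp.single k (1 : S) := by
  induction l with
  | nil => simp
  | cons p l ih =>
      simp only [List.map_cons, List.sum_cons, add_smul]
      rw [ih (fun p hp => hl p (List.mem_cons_of_mem _ hp)),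
        hl p (List.mem_cons_self)]

open Classical in
theorem zeroing : ∀ (n : ℕ) (ps : List (S × VType S)), ps.length ≤ n →
    ∀ R : VType S,
    (ps.map fun p => p.1 • Finsupp.single (⟦p.2⟧ : TyQ S) (1 : S)).sum = 0 →
    ∃ R', TEq (tyS (VType.smul 0 R) ps) (VType.smul 0 R') := by
  intro n
  induction n with
  | zero =>
      intro ps hlen R _
      rw [List.length_eq_zero_iff.mp (Nat.le_zero.mp hlen)]
      exact ⟨R, TEq.refl _⟩
  | succ n ih =>
      intro ps hlen R h0
      cases ps with
      | nil => exact ⟨R, TEq.refl _⟩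
      | cons p rest =>
          have hperm : ((p :: rest).filter fun w => decide ((⟦w.2⟧ : TyQ S) = ⟦p.2⟧))
              ++ ((p :: rest).filter fun w => !decide ((⟦w.2⟧ : TyQ S) = ⟦p.2⟧))
              |>.Perm (p :: rest) :=
            List.filter_append_perm _ (p :: rest)
          generalize hsd : ((p :: rest).filter fun w =>
            decide ((⟦w.2⟧ : TyQ S) = ⟦p.2⟧)) = same at *
          generalize hdd : ((p :: rest).filter fun w =>
            !decide ((⟦w.2⟧ : TyQ S) = ⟦p.2⟧)) = diff at *
          have hsame_mem : ∀ w ∈ same, (⟦w.2⟧ : TyQ S) = ⟦p.2⟧ := by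
            intro w hw
            rw [← hsd] at hw
            simpa using (List.of_mem_filter hw)
          have hp_same : p ∈ same := by
            rw [← hsd]
            exact List.mem_filter.mpr ⟨List.mem_cons_self, by simp⟩
          have hcoeff : ((same.map Prod.fst).sum : S) = 0 := by
            have h1 := sum_block_eval (S := S) ⟦p.2⟧ (p :: rest)
            rw [h0, hsd] at h1
            simpa using h1.symm
          have hdiff0 : (diff.map fun w =>
              w.1 • Finsupp.single (⟦w.2⟧ : TyQ S) (1 : S)).sum = 0 := by
            have hsum : ((same ++ diff).map fun w =>
                w.1 • Finsupp.single (⟦w.2⟧ : TyQ S) (1 : S)).sum = 0 := by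
              rw [(hperm.map _).sum_eq]
              exact h0
            rw [List.map_append, List.sum_append,
              sum_block_const ⟦p.2⟧ same hsame_mem, hcoeff, zero_smul, zero_add] at hsum
            exact hsum
          have hlen' : diff.length ≤ n := by
            have h1 : same.length + diff.length = (p :: rest).length := by
              simpa using hperm.length_eq
            have h2 : 0 < same.length := List.length_pos_iff.mpr (by
              intro hnil; rw [hnil] at hp_same; cases hp_same)
            simp only [List.length_cons] at h1 hlen
            omega
          obtain ⟨pp, pl, hcons⟩ : ∃ pp pl, same = pp :: pl := by
            cases hsc : same with
            | nil => rw [hsc] at hp_same; cases hp_same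
            | cons a b => exact ⟨a, b, rfl⟩
          have hblock : TEq (tyS (VType.smul 0 R) same)
              (VType.add (VType.smul 0 R) (VType.smul 0 p.2)) := by
            rw [hcons]
            have hb := tyS_block (S := S) p.2 pl pp (VType.smul 0 R) (by
              intro w hw
              rw [← hcons] at hw
              exact Quotient.exact (hsame_mem w hw))
            rw [hcons] at hcoeff
            rw [hcoeff] at hb
            exact hb
          have hhead : TEq (tyS (VType.smul 0 R) same)
              (VType.smul 0 (VType.add R p.2)) :=
            hblock.trans (TEq.smulAdd 0 R p.2)
          obtain ⟨R', hR'⟩ := ih diff hlen' (VType.add R p.2) hdiff0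
          refine ⟨R', (tyS_perm hperm.symm _).trans ?_⟩
          have hmid : TEq (tyS (VType.smul 0 R) (same ++ diff))
              (tyS (VType.smul 0 (VType.add R p.2)) diff) := by
            show TEq (List.foldl _ _ (same ++ diff)) _
            rw [List.foldl_append]
            exact tyS_headCong hhead diff
          exact hmid.trans hR'

/-- A type with zero normal form is equivalent to `0·R` for some `R`. -/
theorem teq_zero_of_nf_zero {T : VType S} (h : nf T = 0) :
    ∃ R, TEq T (VType.smul 0 R) := by
  obtain ⟨R, ps, hEq, hnf⟩ := decomp T
  obtain ⟨R', hR'⟩ := zeroing ps.length ps le_rfl R (by rw [← hnf]; exact h)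
  exact ⟨R', hEq.trans hR'⟩

/-- Main induction: any type of `0` or `α·0` has zero normal form. -/
theorem nf_zero_of_typing {Γ : Ctx S} {t : VTerm S} {T : VType S}
    (h : Typing Γ t T) :
    (t = VTerm.zero ∨ ∃ α : S, t = VTerm.smul α VTerm.zero) → nf T = 0 := by
  induction h with
  | ax hx hU =>
      rintro (h | ⟨α, h⟩) <;> cases h
  | zeroI _ _ =>
      intro _
      show (0 : S) • _ = 0
      exact zero_smul _ _
  | arrI _ _ _ =>
      rintro (h | ⟨α, h⟩) <;> cases h
  | arrE U Xs p ps q qs _ _ _ _ _ _ =>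
      rintro (h | ⟨α, h⟩) <;> cases h
  | @faI Γ t v p ps hfree hu hty ih =>
      intro ht
      have h0 : nf (VType.ssumL ((p :: ps).map fun w => (w.1, w.2))) = 0 := by
        have := ih ht
        simpa using this
      refine nf_map_zero (faQ v.1 v.2) (fun w => w.2)
        (fun w => VType.fa v.1 v.2 w.2) (p :: ps) ?_ h0
      intro w hw
      refine ⟨⟦w.2⟧, nf_unit (hu w hw), ?_⟩
      show nf (VType.fa v.1 v.2 w.2) = _
      rw [nf_unit (VType.IsUnit.fa (hu w hw))]
      congr 1
  | @faE Γ t v A p ps hkind hu hty ih =>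
      intro ht
      have h0 := ih ht
      exact nf_map_zero (opnQ v A) (fun w => VType.fa v.1 v.2 w.2)
        (fun w => w.2.substT v A) (p :: ps)
        (by
          intro w hw
          refine ⟨⟦VType.fa v.1 v.2 w.2⟧, nf_unit (VType.IsUnit.fa (hu w hw)), ?_⟩
          rw [nf_subst_unit (hu w hw) v hkind]
          congr 1
          show _ = opn v A (VType.fa v.1 v.2 w.2)
          simp [opn]) h0
  | @smulI Γ t T a _ ih =>
      rintro (h | ⟨α, h⟩)
      · cases h
      · cases h
        have : nf T = 0 := ih (Or.inl rfl)
        show a • nf T = 0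
        rw [this, smul_zero]
  | addI _ _ _ _ =>
      rintro (h | ⟨α, h⟩) <;> cases h
  | equiv _ hTR ih =>
      intro ht
      rw [← nf_sound hTR]
      exact ih ht

end TypeForZeroAux

/-- Type for zero. -/
theorem type_for_zero {S : Type} [CommRing S] {Γ : Ctx S} {t : VTerm S}
    {T : VType S}
    (ht : t = VTerm.zero ∨ ∃ α : S, t = VTerm.smul α VTerm.zero)
    (h : Typing Γ t T) :
    ∃ R : VType S, TEq T (VType.smul 0 R) :=
  teq_zero_of_nf_zero (nf_zero_of_typing h ht)
end

section
/- Sum generation lemma: if Γ ⊢ t + r : S is derivable in λ^vec, then there exist types T and R with S ≡ T + R such that Γ ⊢ t : T and Γ ⊢ r : R are derivable. -/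
/-!
Formalization of the vectorial λ-calculus (Arrighi, Díaz-Caro, Valiron):
syntax of types and terms, type equivalence, typing rules, reduction, etc.
-/

universe u

/-! ### Auxiliary machinery for the sum generation lemma -/

section SumsGenAux

variable {S : Type} [CommRing S]

/-- Prime types: not a sum and not a scalar multiple. -/
def VIsPrime : VType S → Prop
  | .smul _ _ => False
  | .add _ _ => False
  | _ => True

lemma isPrime_of_isUnit {T : VType S} (h : VType.IsUnit T) : VIsPrime T := by
  cases h <;> trivial

lemma teq_ssumL_append : ∀ (l m : List (S × VType S)), l ≠ [] → m ≠ [] →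
    TEq (VType.ssumL (l ++ m)) (VType.add (VType.ssumL l) (VType.ssumL m))
  | [], _, hl, _ => absurd rfl hl
  | [p], q :: m, _, _ => TEq.refl _
  | p :: p' :: l, m, _, hm =>
    TEq.trans (TEq.addCong (TEq.refl _) (teq_ssumL_append (p' :: l) m (by simp) hm))
      (TEq.assoc _ _ _)

lemma teq_ssumL_congr : ∀ {l m : List (S × VType S)},
    List.Forall₂ (fun p q => p.1 = q.1 ∧ TEq p.2 q.2) l m →
    TEq (VType.ssumL l) (VType.ssumL m)
  | [], [], _ => TEq.refl _
  | [p], [q], h => by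
    obtain ⟨⟨h1, h2⟩, -⟩ := List.forall₂_cons.mp h
    show TEq (VType.smul p.1 p.2) (VType.smul q.1 q.2)
    rw [h1]; exact TEq.smulCong _ h2
  | p :: p' :: l, q :: q' :: m, h => by
    obtain ⟨⟨h1, h2⟩, h3⟩ := List.forall₂_cons.mp h
    have ih := teq_ssumL_congr h3
    show TEq (VType.add (VType.smul p.1 p.2) _) (VType.add (VType.smul q.1 q.2) _)
    rw [h1]; exact TEq.addCong (TEq.smulCong _ h2) ih

/-- Decomposition of a type as a list of scalar–prime pairs. -/
def decT : VType S → List (S × VType S)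
  | .smul a T => (decT T).map (fun p => (a * p.1, p.2))
  | .add T R => decT T ++ decT R
  | .uvar n => [(1, .uvar n)]
  | .gvar n => [(1, .gvar n)]
  | .arrow U T => [(1, .arrow U T)]
  | .fa b n U => [(1, .fa b n U)]

lemma decT_ne_nil : ∀ (T : VType S), decT T ≠ []
  | .smul a T => by simp [decT, decT_ne_nil T]
  | .add T R => by simp [decT, decT_ne_nil T]
  | .uvar _ => by simp [decT]
  | .gvar _ => by simp [decT]
  | .arrow _ _ => by simp [decT]
  | .fa _ _ _ => by simp [decT]

lemma decT_prime : ∀ (T : VType S), ∀ p ∈ decT T, VIsPrime p.2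
  | .smul a T => by
    intro p hp
    simp only [decT, List.mem_map] at hp
    obtain ⟨q, hq, rfl⟩ := hp
    exact decT_prime T q hq
  | .add T R => by
    intro p hp
    rcases List.mem_append.mp hp with h | h
    · exact decT_prime T p h
    · exact decT_prime R p h
  | .uvar n => by intro p hp; simp [decT] at hp; subst hp; trivial
  | .gvar n => by intro p hp; simp [decT] at hp; subst hp; trivial
  | .arrow U T => by intro p hp; simp [decT] at hp; subst hp; trivial
  | .fa b n U => by intro p hp; simp [decT] at hp; subst hp; trivial

lemma teq_smul_ssumL (a : S) : ∀ (l : List (S × VType S)), l ≠ [] →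
    TEq (VType.smul a (VType.ssumL l)) (VType.ssumL (l.map (fun p => (a * p.1, p.2))))
  | [], h => absurd rfl h
  | [p], _ => TEq.smulSmul a p.1 p.2
  | p :: q :: l, _ => by
    have ih := teq_smul_ssumL a (q :: l) (by simp)
    refine TEq.trans (TEq.symm (TEq.smulAdd a _ _)) ?_
    exact TEq.addCong (TEq.smulSmul a p.1 p.2) ih

lemma teq_decT : ∀ (T : VType S), TEq T (VType.ssumL (decT T))
  | .smul a T => by
    have ih := teq_decT T
    exact TEq.trans (TEq.smulCong a ih) (teq_smul_ssumL a (decT T) (decT_ne_nil T))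
  | .add T R => by
    have ihT := teq_decT T
    have ihR := teq_decT R
    exact TEq.trans (TEq.addCong ihT ihR)
      (TEq.symm (teq_ssumL_append _ _ (decT_ne_nil T) (decT_ne_nil R)))
  | .uvar n => TEq.symm (TEq.oneSmul _)
  | .gvar n => TEq.symm (TEq.oneSmul _)
  | .arrow U T => TEq.symm (TEq.oneSmul _)
  | .fa b n U => TEq.symm (TEq.oneSmul _)

/-- The set of equivalence classes (as sets) of prime components of a type. -/
def occT : VType S → Set (VType S)
  | .smul _ T => occT T
  | .add T R => occT T ∪ occT R
  | .uvar n => {W | TEq W (.uvar n)}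
  | .gvar n => {W | TEq W (.gvar n)}
  | .arrow U T => {W | TEq W (.arrow U T)}
  | .fa b n U => {W | TEq W (.fa b n U)}

lemma occT_prime {T : VType S} (h : VIsPrime T) : occT T = {W | TEq W T} := by
  cases T <;> first | rfl | exact absurd h (by simp [VIsPrime])

lemma occT_teq {T R : VType S} (h : TEq T R) : occT T = occT R := by
  induction h with
  | refl => rfl
  | symm _ ih => exact ih.symm
  | trans _ _ ih1 ih2 => exact ih1.trans ih2
  | oneSmul T => rfl
  | smulSmul a b T => rfl
  | smulAdd a T R => rfl
  | addSmul a b T => exact Set.union_self _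
  | comm T R => exact Set.union_comm _ _
  | assoc T R Q => exact (Set.union_assoc _ _ _).symm
  | arrowCong h1 h2 ih1 ih2 =>
    ext W
    constructor
    · intro hW; exact hW.trans (TEq.arrowCong h1 h2)
    · intro hW; exact hW.trans (TEq.symm (TEq.arrowCong h1 h2))
  | faCong b n h ih =>
    ext W
    constructor
    · intro hW; exact hW.trans (TEq.faCong b n h)
    · intro hW; exact hW.trans (TEq.symm (TEq.faCong b n h))
  | smulCong a h ih => exact ih
  | addCong h1 h2 ih1 ih2 => rw [show occT (VType.add _ _) = _ ∪ _ from rfl,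
      show occT (VType.add _ _) = _ ∪ _ from rfl, ih1, ih2]

lemma occT_ssumL : ∀ (l : List (S × VType S)), l ≠ [] → (∀ p ∈ l, VIsPrime p.2) →
    occT (VType.ssumL l) = {W | ∃ u ∈ l, TEq W u.2}
  | [], h, _ => absurd rfl h
  | [p], _, hp => by
    show occT p.2 = _
    rw [occT_prime (hp p (by simp))]
    ext W; simp
  | p :: q :: l, _, hp => by
    have ih := occT_ssumL (q :: l) (by simp) (fun u hu => hp u (List.mem_cons_of_mem p hu))
    show occT p.2 ∪ occT (VType.ssumL (q :: l)) = _
    rw [occT_prime (hp p (by simp)), ih]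
    ext W
    simp only [Set.mem_union, Set.mem_setOf_eq, List.mem_cons]
    constructor
    · rintro (h | ⟨u, hu, h⟩)
      · exact ⟨p, Or.inl rfl, h⟩
      · exact ⟨u, Or.inr hu, h⟩
    · rintro ⟨u, rfl | hu, h⟩
      · exact Or.inl h
      · exact Or.inr ⟨u, hu, h⟩

lemma exists_replace {l : List (S × VType S)} :
    ∀ (d : List (S × VType S)), (∀ p ∈ d, ∃ u ∈ l, TEq p.2 u.2) →
    ∃ dT : List (S × VType S),
      List.Forall₂ (fun p q => p.1 = q.1 ∧ TEq p.2 q.2) d dT ∧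
      ∀ q ∈ dT, ∃ u ∈ l, q.2 = u.2
  | [], _ => ⟨[], List.Forall₂.nil, by simp⟩
  | p :: d, h => by
    obtain ⟨u, hu, hte⟩ := h p (by simp)
    obtain ⟨dT, h1, h2⟩ := exists_replace d (fun q hq => h q (List.mem_cons_of_mem p hq))
    refine ⟨(p.1, u.2) :: dT, List.Forall₂.cons ⟨rfl, hte⟩ h1, ?_⟩
    intro q hq
    rcases List.mem_cons.mp hq with rfl | hq
    · exact ⟨u, hu, rfl⟩
    · exact h2 q hq

/-- Main decomposition: a sum of primes equivalent to `T + R` splits into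
two lists of primes drawn from the original list. -/
lemma decompose_teq {l : List (S × VType S)} {T R : VType S}
    (hl : l ≠ []) (hp : ∀ p ∈ l, VIsPrime p.2)
    (hE : TEq (VType.ssumL l) (VType.add T R)) :
    ∃ lT lR : List (S × VType S), lT ≠ [] ∧ lR ≠ [] ∧
      (∀ q ∈ lT, ∃ u ∈ l, q.2 = u.2) ∧ (∀ q ∈ lR, ∃ u ∈ l, q.2 = u.2) ∧
      TEq T (VType.ssumL lT) ∧ TEq R (VType.ssumL lR) ∧
      TEq (VType.ssumL l) (VType.ssumL (lT ++ lR)) := by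
  have hocc : occT (VType.ssumL l) = occT T ∪ occT R := occT_teq hE
  have hlocc := occT_ssumL l hl hp
  have key : ∀ (W : VType S), (∀ p ∈ decT W, ∃ u ∈ l, TEq p.2 u.2) ∨ True := fun _ => Or.inr trivial
  have hmemT : ∀ p ∈ decT T, ∃ u ∈ l, TEq p.2 u.2 := by
    intro p hpmem
    have h1 : p.2 ∈ occT T := by
      rw [occT_teq (teq_decT T), occT_ssumL (decT T) (decT_ne_nil T) (decT_prime T)]
      exact ⟨p, hpmem, TEq.refl _⟩
    have h2 : p.2 ∈ occT (VType.ssumL l) := by rw [hocc]; exact Or.inl h1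
    rw [hlocc] at h2; exact h2
  have hmemR : ∀ p ∈ decT R, ∃ u ∈ l, TEq p.2 u.2 := by
    intro p hpmem
    have h1 : p.2 ∈ occT R := by
      rw [occT_teq (teq_decT R), occT_ssumL (decT R) (decT_ne_nil R) (decT_prime R)]
      exact ⟨p, hpmem, TEq.refl _⟩
    have h2 : p.2 ∈ occT (VType.ssumL l) := by rw [hocc]; exact Or.inr h1
    rw [hlocc] at h2; exact h2
  obtain ⟨lT, hfT, hinT⟩ := exists_replace (decT T) hmemT
  obtain ⟨lR, hfR, hinR⟩ := exists_replace (decT R) hmemR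
  have hlT : lT ≠ [] := by
    intro h; subst h
    exact decT_ne_nil T (List.forall₂_nil_right_iff.mp hfT)
  have hlR : lR ≠ [] := by
    intro h; subst h
    exact decT_ne_nil R (List.forall₂_nil_right_iff.mp hfR)
  have hT : TEq T (VType.ssumL lT) := (teq_decT T).trans (teq_ssumL_congr hfT)
  have hR : TEq R (VType.ssumL lR) := (teq_decT R).trans (teq_ssumL_congr hfR)
  refine ⟨lT, lR, hlT, hlR, hinT, hinR, hT, hR, ?_⟩
  exact (hE.trans (TEq.addCong hT hR)).trans
    (TEq.symm (teq_ssumL_append lT lR hlT hlR))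

/-- Transport of sums under outer ∀-introduction. -/
def gFa (v : Bool × ℕ) : VType S → VType S
  | .smul a T => .smul a (gFa v T)
  | .add T R => .add (gFa v T) (gFa v R)
  | .uvar n => .fa v.1 v.2 (.uvar n)
  | .gvar n => .fa v.1 v.2 (.gvar n)
  | .arrow U T => .fa v.1 v.2 (.arrow U T)
  | .fa b n U => .fa v.1 v.2 (.fa b n U)

lemma gFa_prime (v : Bool × ℕ) {T : VType S} (h : VIsPrime T) :
    gFa v T = VType.fa v.1 v.2 T := by
  cases T <;> first | rfl | exact absurd h (by simp [VIsPrime])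

lemma gFa_teq (v : Bool × ℕ) {T R : VType S} (h : TEq T R) :
    TEq (gFa v T) (gFa v R) := by
  induction h with
  | refl => exact TEq.refl _
  | symm _ ih => exact ih.symm
  | trans _ _ ih1 ih2 => exact ih1.trans ih2
  | oneSmul T => exact TEq.oneSmul _
  | smulSmul a b T => exact TEq.smulSmul _ _ _
  | smulAdd a T R => exact TEq.smulAdd _ _ _
  | addSmul a b T => exact TEq.addSmul _ _ _
  | comm T R => exact TEq.comm _ _
  | assoc T R Q => exact TEq.assoc _ _ _
  | arrowCong h1 h2 => exact TEq.faCong _ _ (TEq.arrowCong h1 h2)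
  | faCong b n h => exact TEq.faCong _ _ (TEq.faCong b n h)
  | smulCong a _ ih => exact TEq.smulCong a ih
  | addCong _ _ ih1 ih2 => exact TEq.addCong ih1 ih2

lemma gFa_ssumL (v : Bool × ℕ) : ∀ (l : List (S × VType S)), l ≠ [] →
    (∀ p ∈ l, VIsPrime p.2) →
    gFa v (VType.ssumL l) = VType.ssumL (l.map (fun w => (w.1, VType.fa v.1 v.2 w.2)))
  | [], h, _ => absurd rfl h
  | [p], _, hp => by
    show VType.smul p.1 (gFa v p.2) = _
    rw [gFa_prime v (hp p (by simp))]; rfl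
  | p :: q :: l, _, hp => by
    have ih := gFa_ssumL v (q :: l) (by simp) (fun u hu => hp u (List.mem_cons_of_mem p hu))
    show VType.add (VType.smul p.1 (gFa v p.2)) (gFa v (VType.ssumL (q :: l))) = _
    rw [gFa_prime v (hp p (by simp)), ih]; rfl

lemma teq_substT {v : Bool × ℕ} {A : VType S} {T R : VType S} (h : TEq T R) :
    TEq (VType.substT T v A) (VType.substT R v A) := by
  induction h with
  | refl => exact TEq.refl _
  | symm _ ih => exact ih.symm
  | trans _ _ ih1 ih2 => exact ih1.trans ih2
  | oneSmul T => exact TEq.oneSmul _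
  | smulSmul a b T => exact TEq.smulSmul _ _ _
  | smulAdd a T R => exact TEq.smulAdd _ _ _
  | addSmul a b T => exact TEq.addSmul _ _ _
  | comm T R => exact TEq.comm _ _
  | assoc T R Q => exact TEq.assoc _ _ _
  | arrowCong _ _ ih1 ih2 => exact TEq.arrowCong ih1 ih2
  | faCong b n h ih =>
    show TEq (VType.substT (VType.fa b n _) v A) (VType.substT (VType.fa b n _) v A)
    simp only [VType.substT]
    split
    · exact TEq.faCong b n h
    · exact TEq.faCong b n ih
  | smulCong a _ ih => exact TEq.smulCong a ih
  | addCong _ _ ih1 ih2 => exact TEq.addCong ih1 ih2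

/-- Transport of sums under outer ∀-elimination. -/
def gSub (v : Bool × ℕ) (A : VType S) : VType S → VType S
  | .smul a T => .smul a (gSub v A T)
  | .add T R => .add (gSub v A T) (gSub v A R)
  | .fa b n U => if v = (b, n) then VType.substT U v A else .fa b n U
  | .uvar n => .uvar n
  | .gvar n => .gvar n
  | .arrow U T => .arrow U T

lemma gSub_teq (v : Bool × ℕ) (A : VType S) {T R : VType S} (h : TEq T R) :
    TEq (gSub v A T) (gSub v A R) := by
  induction h with
  | refl => exact TEq.refl _
  | symm _ ih => exact ih.symm
  | trans _ _ ih1 ih2 => exact ih1.trans ih2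
  | oneSmul T => exact TEq.oneSmul _
  | smulSmul a b T => exact TEq.smulSmul _ _ _
  | smulAdd a T R => exact TEq.smulAdd _ _ _
  | addSmul a b T => exact TEq.addSmul _ _ _
  | comm T R => exact TEq.comm _ _
  | assoc T R Q => exact TEq.assoc _ _ _
  | arrowCong h1 h2 => exact TEq.arrowCong h1 h2
  | faCong b n h =>
    show TEq (if v = (b, n) then _ else _) (if v = (b, n) then _ else _)
    split
    · exact teq_substT h
    · exact TEq.faCong b n h
  | smulCong a _ ih => exact TEq.smulCong a ih
  | addCong _ _ ih1 ih2 => exact TEq.addCong ih1 ih2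

lemma gSub_fa (v : Bool × ℕ) (A : VType S) (U : VType S) :
    gSub v A (VType.fa v.1 v.2 U) = VType.substT U v A := by
  show (if v = (v.1, v.2) then _ else _) = _
  rw [if_pos rfl]

lemma gSub_ssumL (v : Bool × ℕ) (A : VType S) : ∀ (l : List (S × VType S)), l ≠ [] →
    gSub v A (VType.ssumL (l.map (fun w => (w.1, VType.fa v.1 v.2 w.2)))) =
      VType.ssumL (l.map (fun w => (w.1, VType.substT w.2 v A)))
  | [], h => absurd rfl h
  | [p], _ => by
    show VType.smul p.1 (gSub v A (VType.fa v.1 v.2 p.2)) = _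
    rw [gSub_fa]; rfl
  | p :: q :: l, _ => by
    have ih := gSub_ssumL v A (q :: l) (by simp)
    show VType.add (VType.smul p.1 (gSub v A (VType.fa v.1 v.2 p.2))) _ = _
    simp only [List.map_cons] at ih ⊢
    rw [gSub_fa, ih]
    rfl

lemma exists_unfa (v : Bool × ℕ) {l : List (S × VType S)} :
    ∀ (m : List (S × VType S)),
      (∀ q ∈ m, ∃ u ∈ l, q.2 = VType.fa v.1 v.2 u.2) →
      ∃ w : List (S × VType S), m = w.map (fun p => (p.1, VType.fa v.1 v.2 p.2)) ∧
        ∀ p ∈ w, ∃ u ∈ l, p.2 = u.2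
  | [], _ => ⟨[], rfl, by simp⟩
  | q :: m, h => by
    obtain ⟨u, hu, hq⟩ := h q (by simp)
    obtain ⟨w, hw1, hw2⟩ := exists_unfa v m (fun q' hq' => h q' (List.mem_cons_of_mem q hq'))
    refine ⟨(q.1, u.2) :: w, ?_, ?_⟩
    · simp only [List.map_cons, ← hw1]
      exact congrArg (· :: m) (Prod.ext rfl hq)
    · intro p hp
      rcases List.mem_cons.mp hp with rfl | hp
      · exact ⟨u, hu, rfl⟩
      · exact hw2 p hp

end SumsGenAux

/-- Sum generation lemma. -/
theorem sums_generation {S : Type} [CommRing S] {Γ : Ctx S} {t r : VTerm S}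
    {Sty : VType S} (h : Typing Γ (VTerm.add t r) Sty) :
    ∃ T R : VType S, TEq Sty (VType.add T R) ∧ Typing Γ t T ∧ Typing Γ r R := by
  suffices H : ∀ (Γ : Ctx S) (s : VTerm S) (A : VType S), Typing Γ s A →
      ∀ t r : VTerm S, s = VTerm.add t r →
      ∃ T R : VType S, TEq A (VType.add T R) ∧ Typing Γ t T ∧ Typing Γ r R by
    exact H Γ _ _ h t r rfl
  intro Γ s A h
  induction h with
  | ax h1 h2 => intro t r hs; exact absurd hs (by simp)
  | zeroI h ih => intro t r hs; exact absurd hs (by simp)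
  | arrI h1 h2 ih => intro t r hs; exact absurd hs (by simp)
  | arrE U Xs p ps q qs h1 h2 h3 h4 ih1 ih2 => intro t r hs; exact absurd hs (by simp)
  | smulI a h ih => intro t r hs; exact absurd hs (by simp)
  | addI h1 h2 ih1 ih2 =>
    intro t r hs
    injection hs with e1 e2
    subst e1; subst e2
    exact ⟨_, _, TEq.refl _, h1, h2⟩
  | equiv h1 h2 ih =>
    intro t r hs
    obtain ⟨T, R, he, ht, hr⟩ := ih t r hs
    exact ⟨T, R, (TEq.symm h2).trans he, ht, hr⟩
  | faI v p ps hv hu hty ih =>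
    intro t r hs
    obtain ⟨T, R, hE, ht, hr⟩ := ih t r hs
    have hp : ∀ w ∈ p :: ps, VIsPrime w.2 := fun w hw => isPrime_of_isUnit (hu w hw)
    obtain ⟨lT, lR, hlT, hlR, hinT, hinR, hT, hR, hsum⟩ :=
      decompose_teq (l := p :: ps) (by simp) hp hE
    have huT : ∀ w ∈ lT, VType.IsUnit w.2 := by
      intro w hw; obtain ⟨u, hu', he⟩ := hinT w hw; rw [he]; exact hu u hu'
    have huR : ∀ w ∈ lR, VType.IsUnit w.2 := by
      intro w hw; obtain ⟨u, hu', he⟩ := hinR w hw; rw [he]; exact hu u hu'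
    have hpT : ∀ w ∈ lT, VIsPrime w.2 := fun w hw => isPrime_of_isUnit (huT w hw)
    have hpR : ∀ w ∈ lR, VIsPrime w.2 := fun w hw => isPrime_of_isUnit (huR w hw)
    obtain ⟨q, qs, rfl⟩ : ∃ q qs, lT = q :: qs := by
      cases lT with
      | nil => exact absurd rfl hlT
      | cons q qs => exact ⟨q, qs, rfl⟩
    obtain ⟨q', qs', rfl⟩ : ∃ q qs, lR = q :: qs := by
      cases lR with
      | nil => exact absurd rfl hlR
      | cons q qs => exact ⟨q, qs, rfl⟩
    have tyT := Typing.faI v q qs hv huT (Typing.equiv ht hT)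
    have tyR := Typing.faI v q' qs' hv huR (Typing.equiv hr hR)
    refine ⟨_, _, ?_, tyT, tyR⟩
    have h7 := gFa_teq v hsum
    rw [gFa_ssumL v (p :: ps) (by simp) hp,
        gFa_ssumL v ((q :: qs) ++ (q' :: qs')) (by simp) (by
          intro w hw
          rcases List.mem_append.mp hw with hw | hw
          · exact hpT w hw
          · exact hpR w hw),
        List.map_append] at h7
    exact h7.trans (teq_ssumL_append _ _ (by simp) (by simp))
  | faE v A p ps hk hu hty ih =>
    intro t r hs
    obtain ⟨T, R, hE, ht, hr⟩ := ih t r hs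
    have hu' : ∀ w ∈ (p :: ps).map (fun w => (w.1, VType.fa v.1 v.2 w.2)),
        VType.IsUnit w.2 := by
      intro w hw
      simp only [List.mem_map] at hw
      obtain ⟨u, hu', rfl⟩ := hw
      exact VType.IsUnit.fa (hu u hu')
    have hp' : ∀ w ∈ (p :: ps).map (fun w => (w.1, VType.fa v.1 v.2 w.2)),
        VIsPrime w.2 := fun w hw => isPrime_of_isUnit (hu' w hw)
    obtain ⟨lT, lR, hlT, hlR, hinT, hinR, hT, hR, hsum⟩ :=
      decompose_teq (l := (p :: ps).map (fun w => (w.1, VType.fa v.1 v.2 w.2)))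
        (by simp) hp' hE
    have hinT2 : ∀ q ∈ lT, ∃ u ∈ p :: ps, q.2 = VType.fa v.1 v.2 u.2 := by
      intro q hq
      obtain ⟨u, hu2, he⟩ := hinT q hq
      simp only [List.mem_map] at hu2
      obtain ⟨w, hw, rfl⟩ := hu2
      exact ⟨w, hw, he⟩
    have hinR2 : ∀ q ∈ lR, ∃ u ∈ p :: ps, q.2 = VType.fa v.1 v.2 u.2 := by
      intro q hq
      obtain ⟨u, hu2, he⟩ := hinR q hq
      simp only [List.mem_map] at hu2
      obtain ⟨w, hw, rfl⟩ := hu2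
      exact ⟨w, hw, he⟩
    obtain ⟨uT, rfl, hinT3⟩ := exists_unfa v lT hinT2
    obtain ⟨uR, rfl, hinR3⟩ := exists_unfa v lR hinR2
    have huT : ∀ w ∈ uT, VType.IsUnit w.2 := by
      intro w hw; obtain ⟨u, hu2, he⟩ := hinT3 w hw; rw [he]; exact hu u hu2
    have huR : ∀ w ∈ uR, VType.IsUnit w.2 := by
      intro w hw; obtain ⟨u, hu2, he⟩ := hinR3 w hw; rw [he]; exact hu u hu2
    obtain ⟨q, qs, rfl⟩ : ∃ q qs, uT = q :: qs := by
      cases uT with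
      | nil => exact absurd rfl hlT
      | cons q qs => exact ⟨q, qs, rfl⟩
    obtain ⟨q', qs', rfl⟩ : ∃ q qs, uR = q :: qs := by
      cases uR with
      | nil => exact absurd rfl hlR
      | cons q qs => exact ⟨q, qs, rfl⟩
    have tyT := Typing.faE v A q qs hk huT (Typing.equiv ht hT)
    have tyR := Typing.faE v A q' qs' hk huR (Typing.equiv hr hR)
    refine ⟨_, _, ?_, tyT, tyR⟩
    have h7 := gSub_teq v A hsum
    rw [← List.map_append] at h7
    rw [gSub_ssumL v A (p :: ps) (by simp),
        gSub_ssumL v A ((q :: qs) ++ (q' :: qs')) (by simp),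
        List.map_append] at h7
    exact h7.trans (teq_ssumL_append _ _ (by simp) (by simp))
end
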